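/- arXiv:1702.03789 — 5 statements merged into one kernel-verified Lean document; each statement's English description precedes it below -/
import Mathlib

section
/- Let X be a connected graph of uniformly bounded degree that has exponentially many fat bigons at some base vertex x0. Then there is no coarse embedding of X into any δ-hyperbolic connected graph of uniformly bounded degree. -/
open SimpleGraph

/-- A graph has uniformly bounded degree if there is a uniform finite bound on
the cardinality of all neighbour sets. -/
def BddDegree {V : Type*} (G : SimpleGraph V) : Prop :=
  ∃ D : ℕ, ∀ v : V, (G.neighborSet v).encard ≤ D

/-- A walk is geodesic if its length realizes the graph distance between its endpoints. -/
def SimpleGraph.Walk.IsGeodesic {V : Type*} {G : SimpleGraph V} {x y : V}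
    (w : G.Walk x y) : Prop :=
  w.length = G.dist x y

/-- A graph is `δ`-hyperbolic if each side of every geodesic triangle is contained in the
closed `δ`-neighbourhood of the union of the other two sides. -/
def GraphHyperbolic {V : Type*} (G : SimpleGraph V) (δ : ℝ) : Prop :=
  ∀ ⦃a b c : V⦄ (γ₁ : G.Walk a b) (γ₂ : G.Walk b c) (γ₃ : G.Walk c a),
    γ₁.IsGeodesic → γ₂.IsGeodesic → γ₃.IsGeodesic →
      ∀ u ∈ γ₁.support, ∃ v, (v ∈ γ₂.support ∨ v ∈ γ₃.support) ∧ (G.dist u v : ℝ) ≤ δ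

/-- `x` admits an `(L,s,C)`-bigon with respect to the basepoint `x₀`: two paths from `x₀`
to `x`, each of length at most `L·d(x₀,x)`, such that any vertex of the first path outside
the `C`-neighbourhood of `{x₀, x}` is at distance more than `s` from any vertex of the
second path outside that neighbourhood. -/
def IsBigonAt {V : Type*} (G : SimpleGraph V) (x₀ : V) (L s C : ℝ) (x : V) : Prop :=
  ∃ α₁ α₂ : G.Walk x₀ x,
    ((α₁.length : ℝ) ≤ L * G.dist x₀ x) ∧ ((α₂.length : ℝ) ≤ L * G.dist x₀ x) ∧
    ∀ u ∈ α₁.support, ∀ v ∈ α₂.support,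
      (C < (G.dist x₀ u : ℝ) ∧ C < (G.dist x u : ℝ)) →
      (C < (G.dist x₀ v : ℝ) ∧ C < (G.dist x v : ℝ)) →
      s < (G.dist u v : ℝ)

/-- The set `B^X(L,s,C)` of vertices admitting an `(L,s,C)`-bigon. -/
def bigonSet {V : Type*} (G : SimpleGraph V) (x₀ : V) (L s C : ℝ) : Set V :=
  {x | IsBigonAt G x₀ L s C x}

/-- The closed ball of radius `n` about `x` in the graph metric. -/
def gBall {V : Type*} (G : SimpleGraph V) (x : V) (n : ℕ) : Set V :=
  {v | G.dist x v ≤ n}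

/-- `X` has exponentially many fat bigons at `x₀`. -/
def HasExpManyFatBigons {V : Type*} (G : SimpleGraph V) (x₀ : V) : Prop :=
  ∃ s₀ c L : ℝ, 0 ≤ s₀ ∧ 1 < c ∧ 1 < L ∧
    ∀ s : ℝ, s₀ ≤ s → ∃ C : ℝ, 0 ≤ C ∧
      {n : ℕ | (c ^ n : ℝ) ≤ ((bigonSet G x₀ L s C ∩ gBall G x₀ n).ncard : ℝ)}.Infinite

/-- `X` has no fat bigons at `x₀`. -/
def HasNoFatBigons {V : Type*} (G : SimpleGraph V) (x₀ : V) : Prop :=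
  ∀ L : ℝ, 1 ≤ L → ∃ s : ℝ, 0 ≤ s ∧ ∀ C : ℝ, 0 ≤ C →
    ∃ R : ℕ, ∀ x ∈ bigonSet G x₀ L s C, G.dist x₀ x ≤ R

/-- A coarse embedding of the graph `G` into the graph `H`, with multiplicative constant `K`
and compression function `ρ`. -/
def IsCoarseEmbedding {V W : Type*} (G : SimpleGraph V) (H : SimpleGraph W)
    (f : V → W) (K : ℝ) (ρ : ℕ → ℕ) : Prop :=
  1 ≤ K ∧ Filter.Tendsto ρ Filter.atTop Filter.atTop ∧
    ∀ x y : V, (ρ (G.dist x y) : ℝ) ≤ (H.dist (f x) (f y) : ℝ) ∧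
      (H.dist (f x) (f y) : ℝ) ≤ K * (G.dist x y : ℝ)

/-- The Cayley graph of a group with respect to a (symmetric) set `S`. -/
def cayleyGraph (G : Type*) [Group G] (S : Set G) : SimpleGraph G :=
  SimpleGraph.fromRel (fun x y => x⁻¹ * y ∈ S)

/-- The Cayley graph of `G` w.r.t. the basepoint `1` has exponential growth:
`|B_n(1)|^(1/n)` converges to a limit `> 1`. -/
def HasExpGrowth {V : Type*} (G : SimpleGraph V) (x₀ : V) : Prop :=
  ∃ a : ℝ, 1 < a ∧
    Filter.Tendsto (fun n : ℕ => ((gBall G x₀ n).ncard : ℝ) ^ ((n : ℝ)⁻¹))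
      Filter.atTop (nhds a)

/-- `Div_X(n) ≤ M`: for all vertices `a b` with `d(a,b) ≤ n` and every `c ∉ {a, b}`, there is
a path from `a` to `b` of length at most `M` avoiding the ball around `c` of radius
`(1/2)·d(c,{a,b}) − 2`. -/
def DivLE {V : Type*} (G : SimpleGraph V) (n : ℕ) (M : ℝ) : Prop :=
  ∀ a b c : V, G.dist a b ≤ n → c ≠ a → c ≠ b →
    ∃ w : G.Walk a b, (w.length : ℝ) ≤ M ∧
      ∀ u ∈ w.support, ((min (G.dist c a) (G.dist c b) : ℝ)) / 2 - 2 < (G.dist c u : ℝ)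

/-- A group (given as a graph) is one-ended. -/
def OneEnded {V : Type*} (G : SimpleGraph V) : Prop :=
  ∃! e, e ∈ G.end



namespace FatBigon

variable {V : Type*} {G : SimpleGraph V}

/-- Take the first `n` edges of a walk. -/
def takeN {u v : V} : (w : G.Walk u v) → (n : ℕ) → G.Walk u (w.getVert n)
  | .nil, _ => .nil
  | .cons _ _, 0 => .nil
  | .cons h q, n+1 => .cons h (takeN q n)

/-- Drop the first `n` edges of a walk. -/
def dropN {u v : V} : (w : G.Walk u v) → (n : ℕ) → G.Walk (w.getVert n) v
  | .nil, _ => .nil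
  | .cons h q, 0 => .cons h q
  | .cons _ q, n+1 => dropN q n

@[simp] lemma length_takeN {u v : V} : (w : G.Walk u v) → (n : ℕ) →
    (takeN w n).length = min n w.length
  | .nil, n => by simp [takeN]
  | .cons _ _, 0 => by simp [takeN]; rfl
  | .cons h q, n+1 => by
    simp [takeN, length_takeN q n, Nat.succ_min_succ]

@[simp] lemma length_dropN {u v : V} : (w : G.Walk u v) → (n : ℕ) →
    (dropN w n).length = w.length - n
  | .nil, n => by simp [dropN]
  | .cons _ _, 0 => by simp [dropN]; rfl
  | .cons h q, n+1 => by simp [dropN, length_dropN q n]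

lemma getVert_takeN {u v : V} : (w : G.Walk u v) → (n i : ℕ) → (hi : i ≤ n) →
    (takeN w n).getVert i = w.getVert i
  | .nil, n, i, hi => by simp [takeN, SimpleGraph.Walk.getVert]
  | .cons _ _, 0, i, hi => by
    interval_cases i
    simp [takeN]; rfl
  | .cons h q, n+1, 0, hi => by simp [takeN]
  | .cons h q, n+1, i+1, hi => by
    simpa [takeN] using getVert_takeN q n i (by omega)

lemma getVert_dropN {u v : V} : (w : G.Walk u v) → (n i : ℕ) →
    (dropN w n).getVert i = w.getVert (n + i)
  | .nil, n, i => by simp [dropN, SimpleGraph.Walk.getVert]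
  | .cons _ _, 0, i => by simp [dropN]; rfl
  | .cons h q, n+1, i => by
    have h2 : (SimpleGraph.Walk.cons h q).getVert (n+1+i) = q.getVert (n+i) := by
      have h1 : n + 1 + i = (n + i) + 1 := by omega
      rw [h1, SimpleGraph.Walk.getVert_cons_succ]
    rw [h2]
    simpa [dropN] using getVert_dropN q n i

/-- The walk from `w.getVert i` to `w.getVert j` obtained as a sub-walk. -/
def subN {u v : V} (w : G.Walk u v) (i j : ℕ) (hij : i ≤ j) :
    G.Walk (w.getVert i) (w.getVert j) :=
  (takeN (dropN w i) (j - i)).copy rfl (by rw [getVert_dropN]; congr 1; omega)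

lemma length_subN {u v : V} (w : G.Walk u v) (i j : ℕ) (hij : i ≤ j) (hj : j ≤ w.length) :
    (subN w i j hij).length = j - i := by
  simp [subN]
  omega

lemma getVert_subN {u v : V} (w : G.Walk u v) (i j t : ℕ) (hij : i ≤ j) (ht : t ≤ j - i) :
    (subN w i j hij).getVert t = w.getVert (i + t) := by
  simp only [subN, SimpleGraph.Walk.getVert_copy]
  rw [getVert_takeN _ _ _ ht, getVert_dropN]

lemma dist_getVert_le {u v : V} (w : G.Walk u v) (i j : ℕ) (hij : i ≤ j) :
    G.dist (w.getVert i) (w.getVert j) ≤ j - i := by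
  have h2 : (subN w i j hij).length ≤ j - i := by
    simp only [subN, SimpleGraph.Walk.length_copy, length_takeN]
    omega
  exact le_trans (SimpleGraph.dist_le _) h2

end FatBigon

namespace FatBigon

lemma geod_dist_left {V : Type*} {G : SimpleGraph V} (hc : G.Connected) {a b : V}
    (w : G.Walk a b) (hw : w.length = G.dist a b) (i : ℕ) (hi : i ≤ w.length) :
    G.dist a (w.getVert i) = i ∧ G.dist (w.getVert i) b = w.length - i := by
  have h1 : G.dist a (w.getVert i) ≤ i := by
    simpa using dist_getVert_le w 0 i (Nat.zero_le i)
  have h2 : G.dist (w.getVert i) b ≤ w.length - i := by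
    have := dist_getVert_le w i w.length hi
    simpa [SimpleGraph.Walk.getVert_length] using this
  have h3 : G.dist a b ≤ G.dist a (w.getVert i) + G.dist (w.getVert i) b :=
    hc.dist_triangle
  omega

lemma geod_dist_between {V : Type*} {G : SimpleGraph V} (hc : G.Connected) {a b : V}
    (w : G.Walk a b) (hw : w.length = G.dist a b) (i j : ℕ) (hij : i ≤ j)
    (hj : j ≤ w.length) :
    G.dist (w.getVert i) (w.getVert j) = j - i := by
  have h1 := geod_dist_left hc w hw i (le_trans hij hj)
  have h2 := geod_dist_left hc w hw j hj
  have h4 : G.dist a (w.getVert j) ≤ G.dist a (w.getVert i) + G.dist (w.getVert i) (w.getVert j) :=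
    hc.dist_triangle
  have h5 := dist_getVert_le w i j hij
  omega

lemma geod_vertex {V : Type*} {G : SimpleGraph V} (hc : G.Connected) {a b : V}
    (w : G.Walk a b) (hw : w.length = G.dist a b) {x : V} (hx : x ∈ w.support) :
    G.dist a x + G.dist x b = G.dist a b := by
  obtain ⟨n, hn, hnl⟩ := SimpleGraph.Walk.mem_support_iff_exists_getVert.mp hx
  subst hn
  have h1 := geod_dist_left hc w hw n hnl
  omega

/-- A choice of geodesic between two vertices of a connected graph. -/
noncomputable def geod {V : Type*} {G : SimpleGraph V} (hc : G.Connected) (a b : V) :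
    G.Walk a b := (hc.exists_walk_length_eq_dist a b).choose

lemma geod_length {V : Type*} {G : SimpleGraph V} (hc : G.Connected) (a b : V) :
    (geod hc a b).length = G.dist a b := (hc.exists_walk_length_eq_dist a b).choose_spec

lemma reverse_isGeodesic {V : Type*} {G : SimpleGraph V} {a b : V} {w : G.Walk a b}
    (hw : w.length = G.dist a b) : w.reverse.length = G.dist b a := by
  rw [SimpleGraph.Walk.length_reverse, SimpleGraph.dist_comm]; exact hw

lemma subN_isGeodesic {V : Type*} {G : SimpleGraph V} (hc : G.Connected) {a b : V}
    (w : G.Walk a b) (hw : w.length = G.dist a b) (i j : ℕ) (hij : i ≤ j)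
    (hj : j ≤ w.length) :
    (subN w i j hij).length = G.dist (w.getVert i) (w.getVert j) := by
  rw [length_subN w i j hij hj, geod_dist_between hc w hw i j hij hj]

/-- On a geodesic from `a`, vertex distances from `a`. -/
lemma geod_dist_getVert {V : Type*} {G : SimpleGraph V} (hc : G.Connected) {a b : V}
    (w : G.Walk a b) (hw : w.length = G.dist a b) (i : ℕ) (hi : i ≤ w.length) :
    G.dist a (w.getVert i) = i := (geod_dist_left hc w hw i hi).1

end FatBigon


namespace FatBigon

lemma encard_biUnion_le' {α ι : Type*} (s : Finset ι) (f : ι → Set α) :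
    (⋃ i ∈ s, f i).encard ≤ ∑ i ∈ s, (f i).encard := by
  classical
  induction s using Finset.induction_on with
  | empty => simp
  | @insert a s ha ih =>
    rw [Finset.set_biUnion_insert, Finset.sum_insert ha]
    exact le_trans (Set.encard_union_le _ _) (by gcongr)

lemma ncard_le_of_encard_le {α : Type*} {s : Set α} {k : ℕ} (h : s.encard ≤ (k : ℕ∞)) :
    s.ncard ≤ k := by
  have h2 : s.encard ≠ ⊤ := by
    intro ht; rw [ht] at h; exact (by simp : ¬ ((⊤ : ℕ∞) ≤ (k : ℕ∞))) h
  rw [Set.ncard_def]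
  have := ENat.toNat_le_toNat h (by simp)
  simpa using this

lemma ball_finite_bound {V : Type*} {G : SimpleGraph V} (hc : G.Connected) {D0 : ℕ}
    (hD : ∀ v : V, (G.neighborSet v).encard ≤ (D0 : ℕ∞)) (x₀ : V) :
    ∀ n : ℕ, (gBall G x₀ n).Finite ∧ (gBall G x₀ n).encard ≤ (((D0+1)^(n+1) : ℕ) : ℕ∞) := by
  intro n
  induction n with
  | zero =>
    have h0 : gBall G x₀ 0 = {x₀} := by
      ext v
      simp only [gBall, Set.mem_setOf_eq, Nat.le_zero, Set.mem_singleton_iff]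
      rw [hc.dist_eq_zero_iff]
      exact ⟨fun h => h.symm, fun h => h.symm⟩
    rw [h0]
    refine ⟨Set.finite_singleton _, ?_⟩
    rw [Set.encard_singleton]
    exact_mod_cast Nat.one_le_iff_ne_zero.mpr (by positivity)
  | succ n ih =>
    obtain ⟨hfin, hcard⟩ := ih
    classical
    have hNfin : ∀ y : V, (insert y (G.neighborSet y)).Finite := by
      intro y
      exact Set.Finite.insert _ (Set.finite_of_encard_le_coe (hD y))
    have hsub : gBall G x₀ (n+1) ⊆ ⋃ y ∈ hfin.toFinset, insert y (G.neighborSet y) := by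
      intro x hx
      by_cases hxn : G.dist x₀ x ≤ n
      · refine Set.mem_biUnion (s := hfin.toFinset) (t := fun y => insert y (G.neighborSet y)) ?_ (Set.mem_insert x _)
        rw [Finset.mem_coe, Set.Finite.mem_toFinset]
        exact hxn
      · have hd : G.dist x₀ x = n+1 := le_antisymm hx (by omega)
        obtain ⟨w, hw⟩ := hc.exists_walk_length_eq_dist x₀ x
        have hlen : w.length = n + 1 := by rw [hw, hd]
        have hadj : G.Adj (w.getVert n) (w.getVert (n+1)) :=
          w.adj_getVert_succ (by omega)
        have hx' : w.getVert (n+1) = x := by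
          have h9 := w.getVert_length
          rwa [hlen] at h9
        have hy : G.dist x₀ (w.getVert n) ≤ n := by
          simpa using dist_getVert_le w 0 n (Nat.zero_le n)
        refine Set.mem_biUnion (s := hfin.toFinset) (t := fun y => insert y (G.neighborSet y)) (x := w.getVert n) ?_ ?_
        · rw [Finset.mem_coe, Set.Finite.mem_toFinset]
          exact hy
        · show x ∈ insert (w.getVert n) (G.neighborSet (w.getVert n))
          rw [Set.mem_insert_iff, SimpleGraph.mem_neighborSet]
          refine Or.inr ?_
          have h7 := hadj
          rwa [hx'] at h7
    have hfin2 : (gBall G x₀ (n+1)).Finite := by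
      refine Set.Finite.subset ?_ hsub
      exact Set.Finite.biUnion (hfin.toFinset).finite_toSet (fun y _ => hNfin y)
    refine ⟨hfin2, ?_⟩
    have h1 : (gBall G x₀ (n+1)).encard ≤ ∑ y ∈ hfin.toFinset, (insert y (G.neighborSet y)).encard :=
      le_trans (Set.encard_mono hsub) (encard_biUnion_le' _ _)
    have h2 : ∀ y ∈ hfin.toFinset, (insert y (G.neighborSet y)).encard ≤ ((D0 + 1 : ℕ) : ℕ∞) := by
      intro y _
      refine le_trans (Set.encard_insert_le _ _) ?_
      push_cast
      exact add_le_add (hD y) le_rfl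
    have h3 := Finset.sum_le_card_nsmul _ _ _ h2
    have h4 : hfin.toFinset.card ≤ (D0+1)^(n+1) := by
      have h5 := hfin.encard_eq_coe_toFinset_card
      rw [h5] at hcard
      exact_mod_cast hcard
    calc (gBall G x₀ (n+1)).encard ≤ _ := h1
    _ ≤ hfin.toFinset.card • ((D0 + 1 : ℕ) : ℕ∞) := h3
    _ = ((hfin.toFinset.card * (D0 + 1) : ℕ) : ℕ∞) := by
        rw [nsmul_eq_mul]; exact (Nat.cast_mul _ _).symm
    _ ≤ (((D0+1)^(n+1) * (D0 + 1) : ℕ) : ℕ∞) := by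
        exact_mod_cast Nat.mul_le_mul_right _ h4
    _ = (((D0+1)^(n+1+1) : ℕ) : ℕ∞) := by
        exact_mod_cast (pow_succ (D0+1) (n+1)).symm


end FatBigon

namespace FatBigon

open SimpleGraph

/-- Bounded geodesic image: if the geodesic from `u` to `u'` stays at distance `> 2δn`
from a geodesic `γ`, then the projections of `u` and `u'` to `γ` are `8δn+2`-close. -/
lemma BGI {W : Type*} {Y : SimpleGraph W} (hc : Y.Connected) {δ : ℝ} {δn : ℕ}
    (hY : GraphHyperbolic Y δ) (hδn : δ ≤ (δn : ℝ))
    {y₀ y₁ : W} (γ : Y.Walk y₀ y₁) (hγ : γ.length = Y.dist y₀ y₁)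
    {u u' : W}
    (hmid : ∀ x ∈ (geod hc u u').support, ∀ j ≤ γ.length, 2*δn < Y.dist x (γ.getVert j))
    {p p' : ℕ} (hpD : p ≤ γ.length) (hp'D : p' ≤ γ.length)
    (hmin : ∀ j ≤ γ.length, Y.dist u (γ.getVert p) ≤ Y.dist u (γ.getVert j))
    (hmin' : ∀ j ≤ γ.length, Y.dist u' (γ.getVert p') ≤ Y.dist u' (γ.getVert j))
    (hpp' : p ≤ p') :
    p' - p ≤ 8*δn + 2 := by
  set D := γ.length with hD
  by_contra hbig
  push_neg at hbig
  -- midpoint index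
  set j' : ℕ := p + (p' - p)/2 with hj'
  have hj'le : j' ≤ D := by omega
  have hj'p : p ≤ j' := by omega
  have hj'p' : j' ≤ p' := by omega
  -- the subwalk of γ from p to p' is a geodesic containing (γ.getVert j')
  have hsublen : (subN γ p p' hpp').length = Y.dist ((γ.getVert p)) ((γ.getVert p')) :=
    subN_isGeodesic hc γ hγ p p' hpp' hp'D
  have hmemj' : (γ.getVert j') ∈ (subN γ p p' hpp').support := by
    rw [SimpleGraph.Walk.mem_support_iff_exists_getVert]
    refine ⟨j' - p, ?_, ?_⟩
    · rw [getVert_subN γ p p' (j' - p) hpp' (by omega)]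
      congr 1
      omega
    · rw [length_subN γ p p' hpp' hp'D]
      omega
  have hg2 : (geod hc ((γ.getVert p')) u').length = Y.dist ((γ.getVert p')) u' := geod_length hc _ _
  have hg3 : (geod hc u' ((γ.getVert p))).length = Y.dist u' ((γ.getVert p)) := geod_length hc _ _
  obtain ⟨w, hwmem, hwd⟩ := hY (subN γ p p' hpp') (geod hc ((γ.getVert p')) u') (geod hc u' ((γ.getVert p)))
    hsublen hg2 hg3 ((γ.getVert j')) hmemj'
  have hwdn : Y.dist ((γ.getVert j')) w ≤ δn := by
    have : (Y.dist ((γ.getVert j')) w : ℝ) ≤ (δn : ℝ) := le_trans hwd hδn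
    exact_mod_cast this
  -- distances along γ
  have hdpj' : Y.dist ((γ.getVert p)) ((γ.getVert j')) = j' - p := geod_dist_between hc γ hγ p j' hj'p hj'le
  have hdj'p' : Y.dist ((γ.getVert j')) ((γ.getVert p')) = p' - j' := geod_dist_between hc γ hγ j' p' hj'p' hp'D
  rcases hwmem with hw2 | hw3
  · -- w on the geodesic from (γ.getVert p') to u'
    have hvert := geod_vertex hc (geod hc ((γ.getVert p')) u') hg2 hw2
    -- dist ((γ.getVert p')) w ≤ dist ((γ.getVert j')) w
    have hminj' := hmin' j' hj'le
    have htri : Y.dist u' ((γ.getVert j')) ≤ Y.dist u' w + Y.dist w ((γ.getVert j')) := hc.dist_triangle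
    have htri2 : Y.dist w u' + Y.dist ((γ.getVert p')) w ≥ Y.dist ((γ.getVert p')) u' := by
      have := hc.dist_triangle (u := (γ.getVert p')) (v := w) (w := u')
      omega
    have hcm : Y.dist u' w = Y.dist w u' := SimpleGraph.dist_comm
    have hcm2 : Y.dist w ((γ.getVert j')) = Y.dist ((γ.getVert j')) w := SimpleGraph.dist_comm
    have hcm3 : Y.dist u' ((γ.getVert p')) = Y.dist ((γ.getVert p')) u' := SimpleGraph.dist_comm
    have hcm4 : Y.dist u' ((γ.getVert j')) = Y.dist ((γ.getVert j')) u' := SimpleGraph.dist_comm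
    -- conclude dist ((γ.getVert j')) ((γ.getVert p')) ≤ 2δn
    have hfin : Y.dist ((γ.getVert j')) ((γ.getVert p')) ≤ Y.dist ((γ.getVert j')) w + Y.dist w ((γ.getVert p')) := hc.dist_triangle
    have hcm5 : Y.dist w ((γ.getVert p')) = Y.dist ((γ.getVert p')) w := SimpleGraph.dist_comm
    omega
  · -- w on the geodesic from u' to (γ.getVert p) : second triangle (u', (γ.getVert p), u)
    have hg2' : (geod hc ((γ.getVert p)) u).length = Y.dist ((γ.getVert p)) u := geod_length hc _ _
    have hg3' : (geod hc u u').length = Y.dist u u' := geod_length hc _ _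
    obtain ⟨w₂, hw2mem, hw2d⟩ := hY (geod hc u' ((γ.getVert p))) (geod hc ((γ.getVert p)) u) (geod hc u u')
      hg3 hg2' hg3' w hw3
    have hw2dn : Y.dist w w₂ ≤ δn := by
      have : (Y.dist w w₂ : ℝ) ≤ (δn : ℝ) := le_trans hw2d hδn
      exact_mod_cast this
    have hj'w2 : Y.dist ((γ.getVert j')) w₂ ≤ 2*δn := by
      have := hc.dist_triangle (u := (γ.getVert j')) (v := w) (w := w₂)
      omega
    rcases hw2mem with hw2' | hw3'
    · -- w₂ on geodesic from (γ.getVert p) to u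
      have hvert := geod_vertex hc (geod hc ((γ.getVert p)) u) hg2' hw2'
      have hminj := hmin j' hj'le
      have htri : Y.dist u ((γ.getVert j')) ≤ Y.dist u w₂ + Y.dist w₂ ((γ.getVert j')) := hc.dist_triangle
      have htri2 : Y.dist ((γ.getVert p)) w₂ + Y.dist w₂ u ≥ Y.dist ((γ.getVert p)) u := le_of_eq hvert.symm
      have hcm : Y.dist u w₂ = Y.dist w₂ u := SimpleGraph.dist_comm
      have hcm2 : Y.dist w₂ ((γ.getVert j')) = Y.dist ((γ.getVert j')) w₂ := SimpleGraph.dist_comm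
      have hcm3 : Y.dist u ((γ.getVert p)) = Y.dist ((γ.getVert p)) u := SimpleGraph.dist_comm
      have hfin : Y.dist ((γ.getVert j')) ((γ.getVert p)) ≤ Y.dist ((γ.getVert j')) w₂ + Y.dist w₂ ((γ.getVert p)) := hc.dist_triangle
      have hcm5 : Y.dist w₂ ((γ.getVert p)) = Y.dist ((γ.getVert p)) w₂ := SimpleGraph.dist_comm
      have hcm6 : Y.dist ((γ.getVert j')) ((γ.getVert p)) = Y.dist ((γ.getVert p)) ((γ.getVert j')) := SimpleGraph.dist_comm
      omega
    · -- w₂ on the high geodesic from u to u' : contradiction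
      have := hmid w₂ hw3' j' hj'le
      have hcm : Y.dist w₂ ((γ.getVert j')) = Y.dist ((γ.getVert j')) w₂ := SimpleGraph.dist_comm
      omega

end FatBigon


namespace FatBigon

open SimpleGraph

lemma dist_getVert_le' {V : Type*} {G : SimpleGraph V} {u v : V} (w : G.Walk u v) (i j : ℕ) :
    G.dist (w.getVert i) (w.getVert j) ≤ max i j - min i j := by
  rcases le_total i j with hij | hij
  · have := dist_getVert_le w i j hij
    omega
  · have := dist_getVert_le w j i hij
    rw [SimpleGraph.dist_comm] at this
    omega

lemma BGI2 {W : Type*} {Y : SimpleGraph W} (hc : Y.Connected) {δ : ℝ} {δn : ℕ}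
    (hY : GraphHyperbolic Y δ) (hδn : δ ≤ (δn : ℝ))
    {y₀ y₁ : W} (γ : Y.Walk y₀ y₁) (hγ : γ.length = Y.dist y₀ y₁)
    {h : ℕ} (hh : 2*δn + 1 ≤ h)
    {u u' : W} (hd : Y.dist u u' ≤ h)
    (hu : ∀ j ≤ γ.length, 2*h < Y.dist u (γ.getVert j))
    (hu' : ∀ j ≤ γ.length, 2*h < Y.dist u' (γ.getVert j))
    {p p' : ℕ} (hpD : p ≤ γ.length) (hp'D : p' ≤ γ.length)
    (hmin : ∀ j ≤ γ.length, Y.dist u (γ.getVert p) ≤ Y.dist u (γ.getVert j))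
    (hmin' : ∀ j ≤ γ.length, Y.dist u' (γ.getVert p') ≤ Y.dist u' (γ.getVert j)) :
    max p p' - min p p' ≤ 8*δn + 2 := by
  have hmid : ∀ (a b : W), Y.dist a b ≤ h →
      (∀ j ≤ γ.length, 2*h < Y.dist a (γ.getVert j)) →
      ∀ x ∈ (geod hc a b).support, ∀ j ≤ γ.length, 2*δn < Y.dist x (γ.getVert j) := by
    intro a b hab ha x hx j hj
    have hvert := geod_vertex hc (geod hc a b) (geod_length hc a b) hx
    have htri : Y.dist a (γ.getVert j) ≤ Y.dist a x + Y.dist x (γ.getVert j) :=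
      hc.dist_triangle
    have := ha j hj
    omega
  have hd' : Y.dist u' u ≤ h := by rwa [SimpleGraph.dist_comm] at hd
  rcases le_total p p' with hpp' | hpp'
  · have := BGI hc hY hδn γ hγ (hmid u u' hd hu) hpD hp'D hmin hmin' hpp'
    omega
  · have := BGI hc hY hδn γ hγ (hmid u' u hd' hu') hp'D hpD hmin' hmin hpp'
    omega

end FatBigon


namespace FatBigon

open SimpleGraph

/-- Core counting lemma: in a hyperbolic graph, the set of indices `j` along a geodesic `γ`
whose vertex is `(9h+1)`-far from every vertex of a path `β` with the same endpoints is
small compared to `β.length / h`. -/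
lemma badCount {W : Type*} {Y : SimpleGraph W} (hc : Y.Connected) {δ : ℝ} {δn : ℕ}
    (hY : GraphHyperbolic Y δ) (hδn : δ ≤ (δn : ℝ))
    {y₀ y₁ : W} (γ : Y.Walk y₀ y₁) (hγ : γ.length = Y.dist y₀ y₁)
    (β : Y.Walk y₀ y₁) {h : ℕ} (hh : 2*δn + 1 ≤ h)
    (Bad : Finset ℕ)
    (hBad : ∀ j ∈ Bad, j ≤ γ.length ∧ ∀ x ∈ β.support, 9*h + 1 < Y.dist (γ.getVert j) x) :
    Bad.card ≤ (β.length / h + 1) * (4*(8*δn + 2) + 1) := by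
  classical
  set D := γ.length with hD
  set L := β.length with hL
  set B : ℕ := 8*δn + 2 with hB
  have hh1 : 1 ≤ h := by omega
  -- projections of the vertices of β to γ
  have hproj : ∀ t : ℕ, ∃ p, p ≤ D ∧ ∀ j ≤ D,
      Y.dist (β.getVert t) (γ.getVert p) ≤ Y.dist (β.getVert t) (γ.getVert j) := by
    intro t
    obtain ⟨p, hp, hpmin⟩ := Finset.exists_min_image (Finset.range (D+1))
      (fun j => Y.dist (β.getVert t) (γ.getVert j)) ⟨0, by simp⟩
    refine ⟨p, by simpa [Nat.lt_succ_iff] using hp, fun j hj => hpmin j ?_⟩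
    simp [Nat.lt_succ_iff]
    omega
  choose pt hptD hptmin using hproj
  have hp0 : pt 0 = 0 := by
    have h0 : Y.dist (β.getVert 0) (γ.getVert 0) = 0 := by
      rw [β.getVert_zero, γ.getVert_zero, SimpleGraph.dist_self]
    have h1 := hptmin 0 0 (Nat.zero_le D)
    rw [h0, Nat.le_zero] at h1
    have h3 : Y.dist y₀ (γ.getVert (pt 0)) = pt 0 := geod_dist_getVert hc γ hγ _ (hptD 0)
    rw [β.getVert_zero] at h1
    omega
  have hpL : pt L = D := by
    have h0 : Y.dist (β.getVert L) (γ.getVert D) = 0 := by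
      have e1 : β.getVert L = y₁ := β.getVert_length
      have e2 : γ.getVert D = y₁ := γ.getVert_length
      rw [e1, e2, SimpleGraph.dist_self]
    have h1 := hptmin L D le_rfl
    rw [h0, Nat.le_zero] at h1
    have e1 : β.getVert L = y₁ := β.getVert_length
    rw [e1] at h1
    have h3 : Y.dist (γ.getVert (pt L)) y₁ = D - pt L := (geod_dist_left hc γ hγ _ (hptD L)).2
    rw [SimpleGraph.dist_comm] at h3
    have := hptD L
    omega
  -- last crossing time
  set T : ℕ → ℕ := fun j => Nat.findGreatest (fun t => pt t ≤ j) L with hT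
  have hTle : ∀ j, T j ≤ L := fun j => Nat.findGreatest_le L
  have hTspec : ∀ j, pt (T j) ≤ j := by
    intro j
    have h0 : pt 0 ≤ j := by rw [hp0]; exact Nat.zero_le j
    exact Nat.findGreatest_spec (P := fun t => pt t ≤ j) (Nat.zero_le L) h0
  have hTlt : ∀ j ∈ Bad, T j < L := by
    intro j hj
    rcases Nat.lt_or_ge (T j) L with hlt | hge
    · exact hlt
    · exfalso
      have hTL : T j = L := le_antisymm (hTle j) hge
      have h1 := hTspec j
      rw [hTL, hpL] at h1
      have h2 := (hBad j hj).1
      have hjD : j = D := le_antisymm h2 h1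
      have h3 := (hBad j hj).2 y₁ β.end_mem_support
      rw [hjD] at h3
      have e2 : γ.getVert D = y₁ := γ.getVert_length
      rw [e2, SimpleGraph.dist_self] at h3
      omega
  have hTgt : ∀ j ∈ Bad, j < pt (T j + 1) := by
    intro j hj
    have h1 := hTlt j hj
    by_contra hcon
    push_neg at hcon
    exact Nat.findGreatest_is_greatest (P := fun t => pt t ≤ j) (n := L) (k := T j + 1)
      (Nat.lt_succ_self _) (by omega) hcon
  -- fiberwise counting over pieces
  have hmap : ∀ j ∈ Bad, T j / h ∈ Finset.range (L/h + 1) := by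
    intro j hj
    simp only [Finset.mem_range, Nat.lt_succ_iff]
    exact Nat.div_le_div_right (hTle j)
  rw [Finset.card_eq_sum_card_fiberwise hmap]
  have hfiber : ∀ k ∈ Finset.range (L/h + 1),
      (Bad.filter (fun j => T j / h = k)).card ≤ 4*B + 1 := by
    intro k _
    by_cases hcase : ∃ t, k*h ≤ t ∧ t ≤ L ∧ t ≤ k*h + h ∧
        Y.dist (β.getVert t) (γ.getVert (pt t)) ≤ 2*h
    · -- Case A : the piece comes 2h-close to γ; no bad j in this fiber
      obtain ⟨t₂, ht₂1, ht₂2, ht₂3, ht₂4⟩ := hcase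
      have : Bad.filter (fun j => T j / h = k) = ∅ := by
        rw [Finset.filter_eq_empty_iff]
        intro j hj hTj
        obtain ⟨hjD, hbadj⟩ := hBad j hj
        set t := T j with ht
        have htk : k*h ≤ t ∧ t < k*h + h := by
          have hdm := Nat.div_add_mod t h
          have hml : t % h < h := Nat.mod_lt t (by omega)
          rw [hTj, Nat.mul_comm] at hdm
          omega
        have htL : t < L := hTlt j hj
        -- distances within the piece
        have hd1 : Y.dist (β.getVert t) (β.getVert t₂) ≤ h := by
          have := dist_getVert_le' β t t₂
          omega
        have hd2 : Y.dist (β.getVert (t+1)) (β.getVert t₂) ≤ h := by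
          have := dist_getVert_le' β (t+1) t₂
          omega
        -- heights of β at t and t+1 are at most 3h
        have hht : Y.dist (β.getVert t) (γ.getVert (pt t)) ≤ 3*h := by
          have h1 := hptmin t (pt t₂) (hptD t₂)
          have h2 : Y.dist (β.getVert t) (γ.getVert (pt t₂)) ≤
              Y.dist (β.getVert t) (β.getVert t₂) + Y.dist (β.getVert t₂) (γ.getVert (pt t₂)) :=
            hc.dist_triangle
          omega
        have hht1 : Y.dist (β.getVert (t+1)) (γ.getVert (pt (t+1))) ≤ 3*h := by
          have h1 := hptmin (t+1) (pt t₂) (hptD t₂)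
          have h2 : Y.dist (β.getVert (t+1)) (γ.getVert (pt t₂)) ≤
              Y.dist (β.getVert (t+1)) (β.getVert t₂) + Y.dist (β.getVert t₂) (γ.getVert (pt t₂)) :=
            hc.dist_triangle
          omega
        -- the projection jump at the crossing is at most 6h+1
        have hjump : Y.dist (γ.getVert (pt t)) (γ.getVert (pt (t+1))) ≤ 6*h + 1 := by
          have h1 : Y.dist (γ.getVert (pt t)) (γ.getVert (pt (t+1))) ≤
              Y.dist (γ.getVert (pt t)) (β.getVert t) +
                (Y.dist (β.getVert t) (β.getVert (t+1)) +
                  Y.dist (β.getVert (t+1)) (γ.getVert (pt (t+1)))) := by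
            calc Y.dist (γ.getVert (pt t)) (γ.getVert (pt (t+1))) ≤
                Y.dist (γ.getVert (pt t)) (β.getVert t) +
                  Y.dist (β.getVert t) (γ.getVert (pt (t+1))) := hc.dist_triangle
            _ ≤ _ := by
                have := hc.dist_triangle (u := β.getVert t) (v := β.getVert (t+1))
                  (w := γ.getVert (pt (t+1)))
                omega
          have h2 : Y.dist (β.getVert t) (β.getVert (t+1)) ≤ 1 := by
            have := dist_getVert_le' β t (t+1)
            omega
          have h3 : Y.dist (γ.getVert (pt t)) (β.getVert t) =
              Y.dist (β.getVert t) (γ.getVert (pt t)) := SimpleGraph.dist_comm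
          omega
        -- the jump dominates pt (t+1) - pt t as γ is a geodesic
        have hjump2 : pt (t+1) ≤ pt t + (6*h + 1) := by
          rcases le_total (pt t) (pt (t+1)) with hle | hle
          · have := geod_dist_between hc γ hγ (pt t) (pt (t+1)) hle (hptD (t+1))
            omega
          · omega
        -- j is close to γ.getVert (pt t)
        have hjpt : pt t ≤ j := hTspec j
        have hjlt : j < pt (t+1) := hTgt j hj
        have hjc : Y.dist (γ.getVert (pt t)) (γ.getVert j) = j - pt t :=
          geod_dist_between hc γ hγ (pt t) j hjpt hjD
        -- contradiction with badness of j
        have hxmem : β.getVert t ∈ β.support := by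
          rw [SimpleGraph.Walk.mem_support_iff_exists_getVert]
          exact ⟨t, rfl, by omega⟩
        have hfar := hbadj (β.getVert t) hxmem
        have hclose : Y.dist (γ.getVert j) (β.getVert t) ≤
            Y.dist (γ.getVert j) (γ.getVert (pt t)) + Y.dist (γ.getVert (pt t)) (β.getVert t) :=
          hc.dist_triangle
        have hc1 : Y.dist (γ.getVert j) (γ.getVert (pt t)) =
            Y.dist (γ.getVert (pt t)) (γ.getVert j) := SimpleGraph.dist_comm
        have hc2 : Y.dist (γ.getVert (pt t)) (β.getVert t) =
            Y.dist (β.getVert t) (γ.getVert (pt t)) := SimpleGraph.dist_comm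
        omega
      rw [this]
      simp
    · -- Case B : all of the piece is 2h-far from γ; BGI pins the fiber down
      push_neg at hcase
      have hhigh : ∀ t, k*h ≤ t → t ≤ L → t ≤ k*h + h →
          ∀ j ≤ D, 2*h < Y.dist (β.getVert t) (γ.getVert j) := by
        intro t h1 h2 h3 j hj
        have h4 := hcase t h1 h2 h3
        have h5 := hptmin t j hj
        omega
      refine le_trans (Finset.card_le_card (t := Finset.Icc (pt (k*h) - 2*B) (pt (k*h) + 2*B)) ?_) ?_
      · intro j hj
        rw [Finset.mem_filter] at hj
        obtain ⟨hjB, hTj⟩ := hj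
        obtain ⟨hjD, hbadj⟩ := hBad j hjB
        set t := T j with ht
        have htk : k*h ≤ t ∧ t < k*h + h := by
          have hdm := Nat.div_add_mod t h
          have hml : t % h < h := Nat.mod_lt t (by omega)
          rw [hTj, Nat.mul_comm] at hdm
          omega
        have htL : t < L := hTlt j hjB
        have hkhL : k*h ≤ L := by omega
        -- BGI for the pairs (t, t+1) and (t, k*h)
        have bgi1 := BGI2 hc hY hδn γ hγ hh
          (u := β.getVert t) (u' := β.getVert (t+1))
          (by have := dist_getVert_le' β t (t+1); omega)
          (hhigh t (by omega) (by omega) (by omega))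
          (hhigh (t+1) (by omega) (by omega) (by omega))
          (hptD t) (hptD (t+1)) (hptmin t) (hptmin (t+1))
        have bgi2 := BGI2 hc hY hδn γ hγ hh
          (u := β.getVert t) (u' := β.getVert (k*h))
          (by have := dist_getVert_le' β t (k*h); omega)
          (hhigh t (by omega) (by omega) (by omega))
          (hhigh (k*h) (by omega) (by omega) (by omega))
          (hptD t) (hptD (k*h)) (hptmin t) (hptmin (k*h))
        have hjpt : pt t ≤ j := hTspec j
        have hjlt : j < pt (t+1) := hTgt j hjB
        rw [Finset.mem_Icc]
        omega
      · rw [Nat.card_Icc]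
        omega
  refine le_trans (Finset.sum_le_card_nsmul _ _ (4*B + 1) hfiber) ?_
  rw [Finset.card_range, smul_eq_mul]

end FatBigon


namespace FatBigon

open SimpleGraph

lemma goodPair {W : Type*} {Y : SimpleGraph W} (hc : Y.Connected) {δ : ℝ} {δn : ℕ}
    (hY : GraphHyperbolic Y δ) (hδn : δ ≤ (δn : ℝ))
    {y₀ y₁ : W} (γ : Y.Walk y₀ y₁) (hγ : γ.length = Y.dist y₀ y₁)
    (β₁ β₂ : Y.Walk y₀ y₁) {h M : ℕ} (hh : 2*δn + 1 ≤ h)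
    (hsize : 2*M + ((β₁.length / h + 1) + (β₂.length / h + 1)) * (4*(8*δn + 2) + 1)
      < γ.length + 1) :
    ∃ j, M ≤ j ∧ j + M ≤ γ.length ∧
      (∃ x ∈ β₁.support, Y.dist (γ.getVert j) x ≤ 9*h + 1) ∧
      (∃ x ∈ β₂.support, Y.dist (γ.getVert j) x ≤ 9*h + 1) := by
  classical
  set D := γ.length with hD
  set κ := 4*(8*δn + 2) + 1 with hκ
  set Mid := Finset.Icc M (D - M) with hMid
  set Bad1 := Mid.filter (fun j => ∀ x ∈ β₁.support, 9*h + 1 < Y.dist (γ.getVert j) x) with hBad1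
  set Bad2 := Mid.filter (fun j => ∀ x ∈ β₂.support, 9*h + 1 < Y.dist (γ.getVert j) x) with hBad2
  have hMD : 2*M ≤ D := by nlinarith [Nat.zero_le ((β₁.length / h + 1) + (β₂.length / h + 1)), hsize]
  have hmem : ∀ j ∈ Mid, j ≤ D := by
    intro j hj
    rw [hMid, Finset.mem_Icc] at hj
    omega
  have hb1 : Bad1.card ≤ (β₁.length / h + 1) * κ := by
    refine badCount hc hY hδn γ hγ β₁ hh Bad1 ?_
    intro j hj
    rw [hBad1, Finset.mem_filter] at hj
    exact ⟨hmem j hj.1, hj.2⟩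
  have hb2 : Bad2.card ≤ (β₂.length / h + 1) * κ := by
    refine badCount hc hY hδn γ hγ β₂ hh Bad2 ?_
    intro j hj
    rw [hBad2, Finset.mem_filter] at hj
    exact ⟨hmem j hj.1, hj.2⟩
  have hMidcard : Mid.card = D - M - M + 1 := by rw [hMid, Nat.card_Icc]; omega
  have hnon : (Mid \ (Bad1 ∪ Bad2)).Nonempty := by
    rw [← Finset.card_pos]
    have h1 : (Bad1 ∪ Bad2).card ≤ Bad1.card + Bad2.card := Finset.card_union_le _ _
    have h2 : Mid.card - (Bad1 ∪ Bad2).card ≤ (Mid \ (Bad1 ∪ Bad2)).card :=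
      Finset.le_card_sdiff _ _
    have h3 : Bad1.card + Bad2.card ≤ ((β₁.length / h + 1) + (β₂.length / h + 1)) * κ := by
      rw [add_mul]; omega
    omega
  obtain ⟨j, hj⟩ := hnon
  rw [Finset.mem_sdiff, Finset.mem_union] at hj
  obtain ⟨hjMid, hjgood⟩ := hj
  push_neg at hjgood
  obtain ⟨hg1, hg2⟩ := hjgood
  rw [hBad1, Finset.mem_filter] at hg1
  rw [hBad2, Finset.mem_filter] at hg2
  simp only [hjMid, true_and, not_forall, not_lt] at hg1 hg2
  rw [hMid, Finset.mem_Icc] at hjMid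
  refine ⟨j, hjMid.1, by omega, ?_, ?_⟩
  · obtain ⟨x, hx1, hx2⟩ := hg1
    exact ⟨x, hx1, hx2⟩
  · obtain ⟨x, hx1, hx2⟩ := hg2
    exact ⟨x, hx1, hx2⟩

/-- Push a walk through `f`, connecting images of consecutive vertices by geodesics. -/
noncomputable def pushWalk {V W : Type*} {X : SimpleGraph V} {Y : SimpleGraph W}
    (hcY : Y.Connected) (f : V → W) : {a b : V} → X.Walk a b → Y.Walk (f a) (f b)
  | _, _, .nil => .nil
  | _, _, .cons _ q => (geod hcY _ _).append (pushWalk hcY f q)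

lemma pushWalk_length {V W : Type*} {X : SimpleGraph V} {Y : SimpleGraph W}
    (hcY : Y.Connected) (f : V → W) {Kn : ℕ}
    (hK : ∀ a b : V, X.Adj a b → Y.dist (f a) (f b) ≤ Kn)
    {a b : V} (w : X.Walk a b) : (pushWalk hcY f w).length ≤ Kn * w.length := by
  induction w with
  | nil => simp [pushWalk]
  | @cons u v c had q ih =>
    simp only [pushWalk, SimpleGraph.Walk.length_append, SimpleGraph.Walk.length_cons,
      Nat.mul_succ]
    have h2 := hK _ _ had
    have h3 : (geod hcY (f u) (f v)).length = Y.dist (f u) (f v) := geod_length hcY _ _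
    omega

lemma pushWalk_support {V W : Type*} {X : SimpleGraph V} {Y : SimpleGraph W}
    (hcY : Y.Connected) (f : V → W) {Kn : ℕ}
    (hK : ∀ a b : V, X.Adj a b → Y.dist (f a) (f b) ≤ Kn)
    {a b : V} (w : X.Walk a b) : ∀ x ∈ (pushWalk hcY f w).support,
      ∃ u ∈ w.support, Y.dist x (f u) ≤ Kn := by
  induction w with
  | nil =>
    intro x hx
    simp only [pushWalk, SimpleGraph.Walk.support_nil, List.mem_singleton] at hx
    subst hx
    exact ⟨_, SimpleGraph.Walk.start_mem_support _, by rw [SimpleGraph.dist_self]; omega⟩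
  | @cons u v c had q ih =>
    intro x hx
    rw [pushWalk, SimpleGraph.Walk.mem_support_append_iff] at hx
    rcases hx with hx | hx
    · refine ⟨u, SimpleGraph.Walk.start_mem_support _, ?_⟩
      have hvert := geod_vertex hcY (geod hcY (f u) (f v)) (geod_length hcY _ _) hx
      have h2 := hK _ _ had
      have hcm : Y.dist x (f u) = Y.dist (f u) x := SimpleGraph.dist_comm
      omega
    · obtain ⟨u', hu1, hu2⟩ := ih x hx
      exact ⟨u', by rw [SimpleGraph.Walk.support_cons]; exact List.mem_cons_of_mem _ hu1, hu2⟩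

end FatBigon


namespace FatBigon

open SimpleGraph

lemma image_count {V W : Type*} {X : SimpleGraph V} {Y : SimpleGraph W}
    (hcX : X.Connected) (hcY : Y.Connected) {DX DY : ℕ}
    (hDX : ∀ v : V, (X.neighborSet v).encard ≤ (DX : ℕ∞))
    (hDY : ∀ v : W, (Y.neighborSet v).encard ≤ (DY : ℕ∞))
    (f : V → W) {N₀ : ℕ} (hfib : ∀ x y : V, f x = f y → X.dist x y ≤ N₀)
    (S : Set V) (y₀ : W) (R : ℕ)
    (hsmall : ∀ x ∈ S, Y.dist y₀ (f x) ≤ R) :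
    S.ncard ≤ (DY+1)^(R+1) * (DX+1)^(N₀+1) := by
  classical
  have hball := ball_finite_bound hcY hDY y₀ R
  have himg : f '' S ⊆ gBall Y y₀ R := by
    rintro _ ⟨x, hx, rfl⟩
    exact hsmall x hx
  have himgfin : (f '' S).Finite := hball.1.subset himg
  have himgcard : himgfin.toFinset.card ≤ (DY+1)^(R+1) := by
    have h1 : (f '' S).encard ≤ (((DY+1)^(R+1) : ℕ) : ℕ∞) :=
      le_trans (Set.encard_mono himg) hball.2
    rw [himgfin.encard_eq_coe_toFinset_card] at h1
    exact_mod_cast h1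
  have hsub : S ⊆ ⋃ w ∈ himgfin.toFinset, (S ∩ f ⁻¹' {w}) := by
    intro x hx
    refine Set.mem_biUnion (x := f x) ?_ ⟨hx, rfl⟩
    have hm : f x ∈ himgfin.toFinset := by
      rw [Set.Finite.mem_toFinset]
      exact ⟨x, hx, rfl⟩
    exact Finset.mem_coe.mpr hm
  have hpiece : ∀ w ∈ himgfin.toFinset,
      (S ∩ f ⁻¹' {w}).encard ≤ (((DX+1)^(N₀+1) : ℕ) : ℕ∞) := by
    intro w hw
    rw [Set.Finite.mem_toFinset] at hw
    obtain ⟨x, hxS, hxw⟩ := hw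
    have hsub2 : (S ∩ f ⁻¹' {w}) ⊆ gBall X x N₀ := by
      intro y hy
      obtain ⟨hyS, hyw⟩ := hy
      have heq : f x = f y := by
        rw [hxw]
        exact (Set.mem_preimage.mp hyw).symm
      exact hfib x y heq
    exact le_trans (Set.encard_mono hsub2) (ball_finite_bound hcX hDX x N₀).2
  have h2 : S.encard ≤ himgfin.toFinset.card • (((DX+1)^(N₀+1) : ℕ) : ℕ∞) :=
    le_trans (Set.encard_mono hsub) (le_trans (encard_biUnion_le' _ _)
      (Finset.sum_le_card_nsmul _ _ _ hpiece))
  apply ncard_le_of_encard_le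
  calc S.encard ≤ _ := h2
  _ = ((himgfin.toFinset.card * (DX+1)^(N₀+1) : ℕ) : ℕ∞) := by
      rw [nsmul_eq_mul]; exact (Nat.cast_mul _ _).symm
  _ ≤ (((DY+1)^(R+1) * (DX+1)^(N₀+1) : ℕ) : ℕ∞) := by
      exact_mod_cast Nat.mul_le_mul_right _ himgcard

end FatBigon


/-- A connected bounded-degree graph with exponentially many fat bigons at
some base vertex admits no coarse embedding into any `δ`-hyperbolic connected graph of
uniformly bounded degree. -/
theorem no_coarse_embedding_into_hyperbolic
    {V W : Type*} (X : SimpleGraph V) (Y : SimpleGraph W)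
    (hXconn : X.Connected) (hXdeg : BddDegree X)
    (x₀ : V) (hX : HasExpManyFatBigons X x₀)
    (hYconn : Y.Connected) (hYdeg : BddDegree Y)
    (δ : ℝ) (hδ : 1 ≤ δ) (hY : GraphHyperbolic Y δ)
    (f : V → W) (K : ℝ) (ρ : ℕ → ℕ) :
    ¬ IsCoarseEmbedding X Y f K ρ := by
  open FatBigon in
  rintro ⟨hK1, htend, hemb⟩
  obtain ⟨s₀, c, L, hs₀, hc1, hL1, hXs⟩ := hX
  obtain ⟨DX, hDX⟩ := hXdeg
  obtain ⟨DY, hDY⟩ := hYdeg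
  classical
  -- numeric constants
  set δn := ⌈δ⌉₊ with hδndef
  have hδn : δ ≤ (δn : ℝ) := Nat.le_ceil δ
  set Kn := ⌈K⌉₊ with hKndef
  have hKnR : K ≤ (Kn : ℝ) := Nat.le_ceil K
  have hKn1 : 1 ≤ Kn := by
    have : (1:ℝ) ≤ (Kn : ℝ) := le_trans hK1 hKnR
    exact_mod_cast this
  set Ln := ⌈L⌉₊ with hLndef
  have hLnR : L ≤ (Ln : ℝ) := Nat.le_ceil L
  have hLn1 : 1 ≤ Ln := by
    have : (1:ℝ) ≤ (Ln : ℝ) := le_trans (le_of_lt hL1) hLnR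
    exact_mod_cast this
  obtain ⟨μ₀, hμ₀⟩ := pow_unbounded_of_one_lt ((DY:ℝ)+1) hc1
  set μ := μ₀ + 1 with hμdef
  have hc0 : (1:ℝ) ≤ c := le_of_lt hc1
  have hμpow : ((DY:ℝ)+1) < c^μ := by
    refine lt_of_lt_of_le hμ₀ ?_
    exact pow_le_pow_right₀ hc0 (by omega)
  have hμ1 : 1 ≤ μ := by omega
  -- fibers of f are small
  obtain ⟨N₀, hN₀⟩ := Filter.eventually_atTop.mp (htend.eventually_ge_atTop 1)
  have hfib : ∀ x y : V, f x = f y → X.dist x y ≤ N₀ := by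
    intro x y hxy
    by_contra hcon
    push_neg at hcon
    have h1 := (hemb x y).1
    rw [hxy] at h1
    have h0 : (Y.dist (f y) (f y) : ℝ) = 0 := by rw [SimpleGraph.dist_self]; norm_num
    rw [h0] at h1
    have h2 : ρ (X.dist x y) = 0 := by exact_mod_cast le_antisymm (by exact_mod_cast h1) (Nat.zero_le _)
    have h3 := hN₀ (X.dist x y) (by omega)
    omega
  -- Y-side constants
  set B := 8*δn + 2 with hBdef
  set κ := 4*B + 1 with hκdef
  set h := max (2*δn + 1) (8*μ*Kn*Ln*κ) with hhdef
  have hh2δ : 2*δn + 1 ≤ h := le_max_left _ _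
  have hhbig : 8*μ*Kn*Ln*κ ≤ h := le_max_right _ _
  have hhpos : 1 ≤ h := by omega
  set T₀ := 2*Kn + 2*(9*h+1) with hT₀def
  obtain ⟨s₁, hs₁⟩ := Filter.eventually_atTop.mp (htend.eventually_ge_atTop (T₀+1))
  -- choose the separation s and get C from the fat-bigon hypothesis
  set s := max s₀ (s₁ : ℝ) with hsdef
  obtain ⟨C, hC0, hinf⟩ := hXs s (le_max_left _ _)
  set Cn := ⌈C⌉₊ with hCndef
  have hCnR : C ≤ (Cn : ℝ) := Nat.le_ceil C
  set M := Kn*(Cn+2) + 9*h + 2 + Kn with hMdef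
  obtain ⟨m₅, hm₅⟩ := pow_unbounded_of_one_lt (((DX:ℝ)+1)^(N₀+1)) hc1
  -- choose n large in the infinite set
  obtain ⟨n, hnmem, hngt⟩ := hinf.exists_gt (max (8*μ*(M + κ + 1)) (2*(μ + m₅ + 1)))
  have hn1 : 8*μ*(M + κ + 1) < n := lt_of_le_of_lt (le_max_left _ _) hngt
  have hn2 : 2*(μ + m₅ + 1) < n := lt_of_le_of_lt (le_max_right _ _) hngt
  set S := bigonSet X x₀ L s C ∩ gBall X x₀ n with hSdef
  have hcount : (c:ℝ)^n ≤ (S.ncard : ℝ) := hnmem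
  set R := n / (2*μ) with hRdef
  -- pigeonhole : there is a bigon point whose image is far from f x₀
  have hfar : ∃ x ∈ S, R < Y.dist (f x₀) (f x) := by
    by_contra hcon
    push_neg at hcon
    have h1 := image_count hXconn hYconn hDX hDY f hfib S (f x₀) R hcon
    have h2 : (S.ncard : ℝ) ≤ ((DY+1)^(R+1) * (DX+1)^(N₀+1) : ℕ) := by exact_mod_cast h1
    have h3 : (((DY+1)^(R+1) : ℕ) : ℝ) ≤ c^(μ*(R+1)) := by
      push_cast
      rw [pow_mul]
      exact pow_le_pow_left₀ (by positivity) (le_of_lt hμpow) _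
    have h4 : μ*(R+1) ≤ n/2 + μ := by
      have e1 : R * (2*μ) ≤ n := Nat.div_mul_le_self n (2*μ)
      have e2 : μ * R ≤ n/2 := by
        rw [Nat.le_div_iff_mul_le (by omega)]
        calc μ * R * 2 = R * (2*μ) := by ring
        _ ≤ n := e1
      calc μ*(R+1) = μ*R + μ := by ring
      _ ≤ n/2 + μ := by omega
    have h5 : c^(μ*(R+1)) ≤ c^(n/2 + μ) := pow_le_pow_right₀ hc0 h4
    have h6 : (((DX+1)^(N₀+1) : ℕ) : ℝ) < c^m₅ := by push_cast; exact_mod_cast hm₅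
    have h7 : n/2 + μ + m₅ ≤ n := by
      have := Nat.div_add_mod n 2
      have := Nat.mod_lt n (show 0 < 2 by omega)
      omega
    have h8 : (c:ℝ)^n < (c:ℝ)^n := by
      calc (c:ℝ)^n ≤ (S.ncard : ℝ) := hcount
      _ ≤ ((DY+1)^(R+1) * (DX+1)^(N₀+1) : ℕ) := h2
      _ = (((DY+1)^(R+1) : ℕ) : ℝ) * (((DX+1)^(N₀+1) : ℕ) : ℝ) := by push_cast; ring
      _ < c^(n/2 + μ) * c^m₅ := by
          have hcpos : (0:ℝ) < c := by linarith
          refine mul_lt_mul' (le_trans h3 h5) h6 (by positivity) (by positivity)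
      _ = c^(n/2 + μ + m₅) := by rw [← pow_add]
      _ ≤ c^n := pow_le_pow_right₀ hc0 h7
    exact absurd h8 (lt_irrefl _)
  obtain ⟨x, hxS, hxfar⟩ := hfar
  obtain ⟨hxbig, hxball⟩ := hxS
  obtain ⟨α₁, α₂, hα₁len, hα₂len, hsep⟩ := hxbig
  -- push the bigon to Y
  have hKadj : ∀ a b : V, X.Adj a b → Y.dist (f a) (f b) ≤ Kn := by
    intro a b hab
    have h1 := (hemb a b).2
    have h2 : X.dist a b = 1 := SimpleGraph.dist_eq_one_iff_adj.mpr hab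
    rw [h2] at h1
    have h3 : (Y.dist (f a) (f b) : ℝ) ≤ (Kn : ℝ) := by
      push_cast at h1
      linarith
    exact_mod_cast h3
  set β₁ := pushWalk hYconn f α₁ with hβ₁def
  set β₂ := pushWalk hYconn f α₂ with hβ₂def
  set γ := geod hYconn (f x₀) (f x) with hγdef
  have hγ : γ.length = Y.dist (f x₀) (f x) := geod_length hYconn _ _
  set D := γ.length with hDdef
  have hdxn : X.dist x₀ x ≤ n := hxball
  have hαn : ∀ (α : X.Walk x₀ x), ((α.length : ℝ) ≤ L * X.dist x₀ x) → α.length ≤ Ln * n := by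
    intro α hα
    have h2 : (X.dist x₀ x : ℝ) ≤ (n:ℝ) := by exact_mod_cast hdxn
    have h4 : (0:ℝ) ≤ L := by linarith
    have h3 : (α.length:ℝ) ≤ (Ln:ℝ) * (n:ℝ) := by
      calc (α.length:ℝ) ≤ L * X.dist x₀ x := hα
      _ ≤ (Ln:ℝ) * (n:ℝ) := by
          apply mul_le_mul hLnR h2 (by positivity) (by positivity)
    exact_mod_cast h3
  have hβ₁len : β₁.length ≤ Kn * (Ln * n) :=
    le_trans (pushWalk_length hYconn f hKadj α₁)
      (Nat.mul_le_mul_left Kn (hαn α₁ hα₁len))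
  have hβ₂len : β₂.length ≤ Kn * (Ln * n) :=
    le_trans (pushWalk_length hYconn f hKadj α₂)
      (Nat.mul_le_mul_left Kn (hαn α₂ hα₂len))
  have hDlow : R + 1 ≤ D := by
    have : Y.dist (f x₀) (f x) = D := hγ.symm
    omega
  -- arithmetic for goodPair
  have hq : M + κ + 1 ≤ n / (8*μ) := by
    rw [Nat.le_div_iff_mul_le (by omega)]
    calc (M + κ + 1)*(8*μ) = 8*μ*(M + κ + 1) := by ring
    _ ≤ n := le_of_lt hn1
  have hqq : 4 * (n/(8*μ)) ≤ n/(2*μ) := by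
    rw [Nat.le_div_iff_mul_le (by omega)]
    have e1 : (n/(8*μ))*(8*μ) ≤ n := Nat.div_mul_le_self n (8*μ)
    calc 4 * (n/(8*μ)) * (2*μ) = (n/(8*μ))*(8*μ) := by ring
    _ ≤ n := e1
  have hkey : ∀ ℓ : ℕ, ℓ ≤ Kn*(Ln*n) → (ℓ / h) * κ ≤ n/(8*μ) := by
    intro ℓ hℓ
    have h1 : (ℓ / h) * κ ≤ (ℓ * κ) / h := by
      rw [Nat.le_div_iff_mul_le (by omega)]
      calc ℓ / h * κ * h = (ℓ/h)*h*κ := by ring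
      _ ≤ ℓ * κ := Nat.mul_le_mul_right κ (Nat.div_mul_le_self ℓ h)
    have h2 : (ℓ * κ) / h ≤ (Kn*(Ln*n)*κ) / (8*μ*Kn*Ln*κ) := by
      refine le_trans (Nat.div_le_div_right (Nat.mul_le_mul_right κ hℓ)) ?_
      exact Nat.div_le_div_left hhbig (by positivity)
    have h3 : (Kn*(Ln*n)*κ) / (8*μ*Kn*Ln*κ) = n / (8*μ) := by
      rw [show Kn*(Ln*n)*κ = (Kn*(Ln*κ))*n by ring,
        show 8*μ*Kn*Ln*κ = (Kn*(Ln*κ))*(8*μ) by ring]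
      exact Nat.mul_div_mul_left _ _ (by positivity)
    omega
  have hsize : 2*M + ((β₁.length / h + 1) + (β₂.length / h + 1)) * κ < D + 1 := by
    have k1 := hkey _ hβ₁len
    have k2 := hkey _ hβ₂len
    have e1 : ((β₁.length / h + 1) + (β₂.length / h + 1)) * κ
        = (β₁.length / h) * κ + (β₂.length / h) * κ + 2*κ := by ring
    omega
  obtain ⟨j, hjM, hjD, hgood1, hgood2⟩ :=
    goodPair hYconn hY hδn γ hγ β₁ β₂ hh2δ hsize
  obtain ⟨xh, hxhmem, hxhd⟩ := hgood1
  obtain ⟨yh, hyhmem, hyhd⟩ := hgood2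
  obtain ⟨u, humem, hud⟩ := pushWalk_support hYconn f hKadj α₁ xh hxhmem
  obtain ⟨v, hvmem, hvd⟩ := pushWalk_support hYconn f hKadj α₂ yh hyhmem
  have hjlen : j ≤ γ.length := by omega
  have hjdist : Y.dist (f x₀) (γ.getVert j) = j := geod_dist_getVert hYconn γ hγ j hjlen
  have hjdist2 : Y.dist (γ.getVert j) (f x) = D - j := (geod_dist_left hYconn γ hγ j hjlen).2
  -- position estimates in Y
  have hKnCn : Kn*(Cn+2) = Kn*(Cn+1) + Kn := by ring
  have hpos1 : Kn*(Cn+1) + 1 ≤ Y.dist (f x₀) (f u) := by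
    have t1 : Y.dist (f x₀) (γ.getVert j) ≤
        Y.dist (f x₀) (f u) + Y.dist (f u) (γ.getVert j) := hYconn.dist_triangle
    have t2 : Y.dist (f u) (γ.getVert j) ≤ Y.dist (f u) xh + Y.dist xh (γ.getVert j) :=
      hYconn.dist_triangle
    have t3 : Y.dist (f u) xh = Y.dist xh (f u) := SimpleGraph.dist_comm
    have t4 : Y.dist xh (γ.getVert j) = Y.dist (γ.getVert j) xh := SimpleGraph.dist_comm
    have e : 1 ≤ Kn := hKn1
    omega
  have hpos2 : Kn*(Cn+1) + 1 ≤ Y.dist (f u) (f x) := by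
    have t1 : Y.dist (γ.getVert j) (f x) ≤
        Y.dist (γ.getVert j) (f u) + Y.dist (f u) (f x) := hYconn.dist_triangle
    have t2 : Y.dist (γ.getVert j) (f u) ≤ Y.dist (γ.getVert j) xh + Y.dist xh (f u) :=
      hYconn.dist_triangle
    have t3 : Y.dist xh (f u) = Y.dist (f u) xh := SimpleGraph.dist_comm
    omega
  have hpos3 : Kn*(Cn+1) + 1 ≤ Y.dist (f x₀) (f v) := by
    have t1 : Y.dist (f x₀) (γ.getVert j) ≤
        Y.dist (f x₀) (f v) + Y.dist (f v) (γ.getVert j) := hYconn.dist_triangle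
    have t2 : Y.dist (f v) (γ.getVert j) ≤ Y.dist (f v) yh + Y.dist yh (γ.getVert j) :=
      hYconn.dist_triangle
    have t3 : Y.dist (f v) yh = Y.dist yh (f v) := SimpleGraph.dist_comm
    have t4 : Y.dist yh (γ.getVert j) = Y.dist (γ.getVert j) yh := SimpleGraph.dist_comm
    omega
  have hpos4 : Kn*(Cn+1) + 1 ≤ Y.dist (f v) (f x) := by
    have t1 : Y.dist (γ.getVert j) (f x) ≤
        Y.dist (γ.getVert j) (f v) + Y.dist (f v) (f x) := hYconn.dist_triangle
    have t2 : Y.dist (γ.getVert j) (f v) ≤ Y.dist (γ.getVert j) yh + Y.dist yh (f v) :=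
      hYconn.dist_triangle
    have t3 : Y.dist yh (f v) = Y.dist (f v) yh := SimpleGraph.dist_comm
    omega
  -- deduce the C-conditions in X
  have hKpos : (0:ℝ) < K := lt_of_lt_of_le zero_lt_one hK1
  have hCcond : ∀ (a b : V), Kn*(Cn+1) + 1 ≤ Y.dist (f a) (f b) → C < (X.dist a b : ℝ) := by
    intro a b hab
    have e1 := (hemb a b).2
    have e2 : (Kn:ℝ)*((Cn:ℝ)+1) + 1 ≤ (Y.dist (f a) (f b) : ℝ) := by exact_mod_cast hab
    have e3 : K * C < (Kn:ℝ)*((Cn:ℝ)+1) + 1 := by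
      have : K * C ≤ (Kn:ℝ)*(Cn:ℝ) := by
        apply mul_le_mul hKnR hCnR hC0 (by positivity)
      have h2 : (0:ℝ) ≤ (Kn:ℝ) := by positivity
      have h3 : (Kn:ℝ)*((Cn:ℝ)+1) = (Kn:ℝ)*(Cn:ℝ) + (Kn:ℝ) := by ring
      linarith
    have e4 : K * C < K * (X.dist a b : ℝ) := by linarith
    exact lt_of_mul_lt_mul_left e4 (le_of_lt hKpos)
  -- the pair is close in Y
  have hsmall : Y.dist (f u) (f v) ≤ T₀ := by
    have t1 : Y.dist (f u) (f v) ≤ Y.dist (f u) (γ.getVert j) + Y.dist (γ.getVert j) (f v) :=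
      hYconn.dist_triangle
    have t2 : Y.dist (f u) (γ.getVert j) ≤ Y.dist (f u) xh + Y.dist xh (γ.getVert j) :=
      hYconn.dist_triangle
    have t3 : Y.dist (γ.getVert j) (f v) ≤ Y.dist (γ.getVert j) yh + Y.dist yh (f v) :=
      hYconn.dist_triangle
    have t4 : Y.dist (f u) xh = Y.dist xh (f u) := SimpleGraph.dist_comm
    have t5 : Y.dist xh (γ.getVert j) = Y.dist (γ.getVert j) xh := SimpleGraph.dist_comm
    have t6 : Y.dist yh (f v) = Y.dist (f v) yh := SimpleGraph.dist_comm
    omega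
  -- contradiction with the separation property of the bigon
  have hduv : X.dist u v < s₁ := by
    by_contra hcon
    push_neg at hcon
    have e1 := hs₁ (X.dist u v) hcon
    have e2 := (hemb u v).1
    have e3 : (ρ (X.dist u v) : ℝ) ≤ (T₀ : ℝ) := by
      refine le_trans e2 ?_
      exact_mod_cast hsmall
    have e4 : (T₀:ℕ) + 1 ≤ ρ (X.dist u v) := e1
    have e5 : ((T₀:ℕ):ℝ) + 1 ≤ (ρ (X.dist u v) : ℝ) := by exact_mod_cast e4
    linarith
  have hbig := hsep u humem v hvmem
    ⟨hCcond x₀ u hpos1, by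
      have := hCcond u x hpos2
      rwa [SimpleGraph.dist_comm] at this⟩
    ⟨hCcond x₀ v hpos3, by
      have := hCcond v x hpos4
      rwa [SimpleGraph.dist_comm] at this⟩
  have e6 : (X.dist u v : ℝ) < (s₁:ℝ) := by exact_mod_cast hduv
  have e7 : (s₁:ℝ) ≤ s := le_max_right _ _
  linarith
end

section
/- Let X be a connected graph of uniformly bounded degree with base vertex x0, and suppose X has no fat bigons at x0. Then for any other vertex x0' of X, X has no fat bigons at x0'. (Hence having no fat bigons is independent of the choice of basepoint.) -/
open SimpleGraph

/-- Having no fat bigons is independent of the basepoint. -/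
theorem hasNoFatBigons_basepoint_invariant
    {V : Type*} (X : SimpleGraph V)
    (hXconn : X.Connected) (hXdeg : BddDegree X)
    (x₀ : V) (h : HasNoFatBigons X x₀) :
    ∀ x₀' : V, HasNoFatBigons X x₀' := by
  classical
  intro x₀' L hL
  obtain ⟨s, hs0, hs⟩ := h (L + 1) (by linarith)
  refine ⟨s, hs0, ?_⟩
  intro C hC
  set d₀ : ℕ := X.dist x₀ x₀' with hd₀
  obtain ⟨R, hR⟩ := hs (C + d₀) (by positivity)
  obtain ⟨w, hw⟩ := hXconn.exists_walk_length_eq_dist x₀ x₀'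
  refine ⟨d₀ + max R (d₀ * ⌈L + 1⌉₊), ?_⟩
  intro x hx
  have htri : X.dist x₀' x ≤ d₀ + X.dist x₀ x := by
    calc X.dist x₀' x ≤ X.dist x₀' x₀ + X.dist x₀ x := hXconn.dist_triangle
      _ = d₀ + X.dist x₀ x := by rw [SimpleGraph.dist_comm]
  by_cases hcase : X.dist x₀ x ≤ d₀ * ⌈L + 1⌉₊
  · have : X.dist x₀' x ≤ d₀ + d₀ * ⌈L + 1⌉₊ := le_trans htri (by omega)
    exact le_trans this (by simp [Nat.add_le_add_iff_left, le_max_right])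
  · push_neg at hcase
    obtain ⟨α₁, α₂, h1, h2, hsep⟩ := hx
    have hDlb : (d₀ : ℝ) * (L + 1) ≤ (X.dist x₀ x : ℝ) := by
      have h1' : ((d₀ * ⌈L + 1⌉₊ : ℕ) : ℝ) ≤ (X.dist x₀ x : ℝ) := by
        exact_mod_cast hcase.le
      have h2' : (L + 1 : ℝ) ≤ (⌈L + 1⌉₊ : ℝ) := Nat.le_ceil _
      push_cast at h1'
      nlinarith [Nat.cast_nonneg (α := ℝ) d₀]
    have hd' : (X.dist x₀' x : ℝ) ≤ (d₀ : ℝ) + (X.dist x₀ x : ℝ) := by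
      exact_mod_cast htri
    have key : x ∈ bigonSet X x₀ (L + 1) s (C + d₀) := by
      refine ⟨w.append α₁, w.append α₂, ?_, ?_, ?_⟩
      · rw [SimpleGraph.Walk.length_append]
        push_cast
        rw [hw]
        nlinarith
      · rw [SimpleGraph.Walk.length_append]
        push_cast
        rw [hw]
        nlinarith
      · intro u hu v hv ⟨hu1, hu2⟩ ⟨hv1, hv2⟩
        have hd₀C : (d₀ : ℝ) ≤ C + d₀ := by linarith
        have hmem : ∀ z, z ∈ w.support → (X.dist x₀ z : ℝ) ≤ (d₀ : ℝ) := by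
          intro z hz
          have h3 : X.dist x₀ z ≤ (w.takeUntil z hz).length :=
            SimpleGraph.dist_le _
          have h4 := SimpleGraph.Walk.length_takeUntil_le w hz
          rw [hw] at h4
          exact_mod_cast le_trans h3 h4
        have hu' : u ∈ α₁.support := by
          rcases (SimpleGraph.Walk.mem_support_append_iff _ _).mp hu with h' | h'
          · exact absurd (le_trans (hmem u h') hd₀C) (not_le.mpr hu1)
          · exact h'
        have hv' : v ∈ α₂.support := by
          rcases (SimpleGraph.Walk.mem_support_append_iff _ _).mp hv with h' | h'
          · exact absurd (le_trans (hmem v h') hd₀C) (not_le.mpr hv1)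
          · exact h'
        have htu : X.dist x₀ u ≤ d₀ + X.dist x₀' u := hXconn.dist_triangle
        have htv : X.dist x₀ v ≤ d₀ + X.dist x₀' v := hXconn.dist_triangle
        have htu' : (X.dist x₀ u : ℝ) ≤ (d₀ : ℝ) + (X.dist x₀' u : ℝ) := by
          exact_mod_cast htu
        have htv' : (X.dist x₀ v : ℝ) ≤ (d₀ : ℝ) + (X.dist x₀' v : ℝ) := by
          exact_mod_cast htv
        refine hsep u hu' v hv' ⟨by linarith, ?_⟩ ⟨by linarith, ?_⟩
        · have : (d₀ : ℝ) ≥ 0 := Nat.cast_nonneg _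
          linarith
        · have : (d₀ : ℝ) ≥ 0 := Nat.cast_nonneg _
          linarith
    have := hR x key
    calc X.dist x₀' x ≤ d₀ + X.dist x₀ x := htri
      _ ≤ d₀ + R := by omega
      _ ≤ d₀ + max R (d₀ * ⌈L + 1⌉₊) := by simp [Nat.add_le_add_iff_left, le_max_left]
end

section
/- Let X and Y be connected graphs of uniformly bounded degree, let f be a coarse embedding of X into Y, and suppose X has exponentially many fat bigons at a base vertex x0. Then Y has exponentially many fat bigons at y0 = f(x0). -/
open SimpleGraph

theorem dist_start_le_of_mem_support {V : Type*} {G : SimpleGraph V} {x y : V}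
    (p : G.Walk x y) {u : V} (hu : u ∈ p.support) : G.dist x u ≤ p.length := by
  classical
  exact le_trans (G.dist_le (p.takeUntil u hu)) (p.length_takeUntil_le hu)

theorem dist_end_le_of_mem_support {V : Type*} {G : SimpleGraph V} {x y : V}
    (p : G.Walk x y) {u : V} (hu : u ∈ p.support) : G.dist y u ≤ p.length := by
  have := dist_start_le_of_mem_support p.reverse (by simpa using hu)
  simpa using this

theorem exists_adj_dist {V : Type*} {G : SimpleGraph V} (hconn : G.Connected) {x w : V}
    (h : G.dist x w ≠ 0) : ∃ v, G.Adj v w ∧ G.dist x v + 1 ≤ G.dist x w := by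
  obtain ⟨p, hp⟩ := hconn.exists_walk_length_eq_dist w x
  cases p with
  | nil => simp [SimpleGraph.dist_self] at h
  | cons a q =>
      rename_i v
      refine ⟨v, a.symm, ?_⟩
      have h1 : G.dist x v ≤ q.length := by
        simpa [SimpleGraph.dist_comm] using G.dist_le q
      have h2 : G.dist w x = q.length + 1 := by simpa using hp.symm
      rw [SimpleGraph.dist_comm] at h2
      omega

theorem gBall_finite_card {V : Type*} {G : SimpleGraph V} (hconn : G.Connected) {D : ℕ}
    (hdeg : ∀ v, (G.neighborSet v).encard ≤ D) (x : V) (n : ℕ) :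
    (gBall G x n).Finite ∧ (gBall G x n).ncard ≤ (D+1)^n := by
  classical
  induction n with
  | zero =>
      have hball : gBall G x 0 = {x} := by
        ext v
        simp only [gBall, Set.mem_setOf_eq, Nat.le_zero, Set.mem_singleton_iff]
        rw [hconn.dist_eq_zero_iff]
        exact eq_comm
      rw [hball]
      simp
  | succ n IH =>
      obtain ⟨hfin, hcard⟩ := IH
      have hNfin : ∀ v : V, (insert v (G.neighborSet v)).Finite := fun v =>
        Set.Finite.insert v (Set.finite_of_encard_le_coe (hdeg v))
      set t : Finset V := hfin.toFinset.biUnion (fun v => (hNfin v).toFinset) with ht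
      have hsub : gBall G x (n+1) ⊆ ↑t := by
        intro w hw
        have hw' : G.dist x w ≤ n + 1 := hw
        by_cases h0 : G.dist x w = 0
        · have hx : x ∈ gBall G x n := by
            simp [gBall, SimpleGraph.dist_self]
          have hwx : x = w := (hconn.dist_eq_zero_iff).mp h0
          subst hwx
          simp only [ht, Finset.coe_biUnion, Set.mem_iUnion]
          exact ⟨x, by simpa [Set.Finite.mem_toFinset] using hx, by simp [Set.Finite.mem_toFinset]⟩
        · obtain ⟨v, hadj, hdist⟩ := exists_adj_dist hconn h0
          have hv : v ∈ gBall G x n := by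
            simp only [gBall, Set.mem_setOf_eq]; omega
          simp only [ht, Finset.coe_biUnion, Set.mem_iUnion]
          refine ⟨v, by simpa [Set.Finite.mem_toFinset] using hv, ?_⟩
          simp [Set.Finite.mem_toFinset, hadj]
      have htfin : (gBall G x (n+1)).Finite := t.finite_toSet.subset hsub
      refine ⟨htfin, ?_⟩
      have h1 : (gBall G x (n+1)).ncard ≤ t.card := by
        have := Set.ncard_le_ncard hsub t.finite_toSet
        simpa using this
      have h2 : t.card ≤ hfin.toFinset.card * (D+1) := by
        apply Finset.card_biUnion_le_card_mul
        intro v _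
        have : (insert v (G.neighborSet v)).ncard ≤ D + 1 := by
          have hD : (G.neighborSet v).ncard ≤ D :=
            ((Set.encard_le_coe_iff_finite_ncard_le).mp (hdeg v)).2
          calc (insert v (G.neighborSet v)).ncard ≤ (G.neighborSet v).ncard + 1 :=
                Set.ncard_insert_le _ _
            _ ≤ D + 1 := by omega
        rwa [Set.ncard_eq_toFinset_card _ (hNfin v)] at this
      have h3 : hfin.toFinset.card = (gBall G x n).ncard := (Set.ncard_eq_toFinset_card _ hfin).symm
      calc (gBall G x (n+1)).ncard ≤ hfin.toFinset.card * (D+1) := le_trans h1 h2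
        _ ≤ (D+1)^n * (D+1) := by rw [h3]; exact Nat.mul_le_mul_right _ hcard
        _ = (D+1)^(n+1) := by ring

noncomputable def connectW {W : Type*} {Y : SimpleGraph W} (hY : Y.Connected) (u v : W) :
    Y.Walk u v := (hY.exists_walk_length_eq_dist u v).choose

theorem connectW_length {W : Type*} {Y : SimpleGraph W} (hY : Y.Connected) (u v : W) :
    (connectW hY u v).length = Y.dist u v := (hY.exists_walk_length_eq_dist u v).choose_spec

noncomputable def mapWalk {V W : Type*} {X : SimpleGraph V} {Y : SimpleGraph W}
    (hY : Y.Connected) (f : V → W) : {x y : V} → X.Walk x y → Y.Walk (f x) (f y)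
  | _, _, .nil => .nil
  | _, _, .cons (v := v) _ p => (connectW hY _ (f v)).append (mapWalk hY f p)

theorem mapWalk_length_le {V W : Type*} {X : SimpleGraph V} {Y : SimpleGraph W}
    (hY : Y.Connected) (f : V → W) {K : ℝ} (hK0 : 0 ≤ K)
    (hK1 : ∀ u v : V, X.Adj u v → (Y.dist (f u) (f v) : ℝ) ≤ K)
    {x y : V} (p : X.Walk x y) : ((mapWalk hY f p).length : ℝ) ≤ K * p.length := by
  induction p with
  | nil => simp [mapWalk]
  | cons h p IH =>
      rename_i a b c
      simp only [mapWalk, SimpleGraph.Walk.length_append, SimpleGraph.Walk.length_cons]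
      push_cast
      have h1 : ((connectW hY (f a) (f b)).length : ℝ) ≤ K := by
        rw [connectW_length]; exact hK1 _ _ h
      have := IH
      push_cast at this ⊢
      nlinarith [this, h1]

theorem mapWalk_support {V W : Type*} {X : SimpleGraph V} {Y : SimpleGraph W}
    (hY : Y.Connected) (f : V → W) {K : ℝ} (hK0 : 0 ≤ K)
    (hK1 : ∀ u v : V, X.Adj u v → (Y.dist (f u) (f v) : ℝ) ≤ K)
    {x y : V} (p : X.Walk x y) :
    ∀ w ∈ (mapWalk hY f p).support, ∃ u ∈ p.support, (Y.dist (f u) w : ℝ) ≤ K := by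
  induction p with
  | nil =>
      intro w hw
      simp only [mapWalk, SimpleGraph.Walk.support_nil, List.mem_singleton] at hw
      subst hw
      exact ⟨_, SimpleGraph.Walk.start_mem_support _, by simp [SimpleGraph.dist_self, hK0]⟩
  | cons h p IH =>
      rename_i a b c
      intro w hw
      rw [mapWalk] at hw
      rw [SimpleGraph.Walk.mem_support_append_iff] at hw
      cases hw with
      | inl hw =>
          refine ⟨a, SimpleGraph.Walk.start_mem_support _, ?_⟩
          have h1 : Y.dist (f a) w ≤ (connectW hY (f a) (f b)).length :=
            dist_start_le_of_mem_support _ hw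
          have h2 : ((connectW hY (f a) (f b)).length : ℝ) ≤ K := by
            rw [connectW_length]; exact hK1 _ _ h
          exact le_trans (by exact_mod_cast h1) h2
      | inr hw =>
          obtain ⟨u, hu, hd⟩ := IH w hw
          exact ⟨u, by simp [SimpleGraph.Walk.support_cons, hu], hd⟩

theorem ncard_le_mul_ncard_image {α β : Type*} (f : α → β) {S : Set α} (hS : S.Finite)
    (B : ℕ) (hfib : ∀ y, ({x ∈ S | f x = y}).ncard ≤ B) :
    S.ncard ≤ B * (f '' S).ncard := by
  classical
  have key : hS.toFinset.card ≤ B * (hS.toFinset.image f).card := by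
    apply Finset.card_le_mul_card_image
    intro a _
    have : ({x ∈ S | f x = a}).ncard ≤ B := hfib a
    have heq : {x ∈ S | f x = a} = ↑(hS.toFinset.filter (fun x => f x = a)) := by
      ext z; simp [Set.Finite.mem_toFinset]
    rw [heq, Set.ncard_coe_finset] at this
    exact this
  have h1 : S.ncard = hS.toFinset.card := Set.ncard_eq_toFinset_card _ hS
  have h2 : (f '' S).ncard = (hS.toFinset.image f).card := by
    have : f '' S = ↑(hS.toFinset.image f) := by
      ext z; simp [Set.Finite.mem_toFinset]
    rw [this, Set.ncard_coe_finset]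
  rw [h1, h2]; exact key

theorem le_of_sq_le_sq'' {a b : ℝ} (ha : 0 ≤ a) (hb : 0 ≤ b) (h : a^2 ≤ b^2) : a ≤ b := by
  nlinarith

set_option maxHeartbeats 1000000 in
/-- A coarse embedding transports exponentially many fat bigons at `x₀`
to exponentially many fat bigons at `f x₀`. -/
theorem coarseEmbedding_hasExpManyFatBigons
    {V W : Type*} (X : SimpleGraph V) (Y : SimpleGraph W)
    (hXconn : X.Connected) (hXdeg : BddDegree X)
    (hYconn : Y.Connected) (hYdeg : BddDegree Y)
    (f : V → W) (K : ℝ) (ρ : ℕ → ℕ)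
    (hf : IsCoarseEmbedding X Y f K ρ)
    (x₀ : V) (hX : HasExpManyFatBigons X x₀) :
    HasExpManyFatBigons Y (f x₀) := by
  classical
  obtain ⟨hK, hρ, hfb⟩ := hf
  obtain ⟨s₀, c, L, hs₀, hc, hL, hbig⟩ := hX
  obtain ⟨DX, hDX⟩ := hXdeg
  obtain ⟨DY, hDY⟩ := hYdeg
  have hK0 : (0:ℝ) < K := lt_of_lt_of_le one_pos hK
  have hc0 : (0:ℝ) < c := lt_trans one_pos hc
  have hL0 : (0:ℝ) < L := lt_trans one_pos hL
  -- adjacency bound in Y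
  have hadjK : ∀ u v : V, X.Adj u v → (Y.dist (f u) (f v) : ℝ) ≤ K := by
    intro u v huv
    have h1 := (hfb u v).2
    rw [SimpleGraph.dist_eq_one_iff_adj.mpr huv] at h1
    simpa using h1
  -- multiplicity constant
  obtain ⟨M₀, hM₀⟩ : ∃ M₀ : ℕ, ∀ m ≥ M₀, 1 ≤ ρ m := by
    have := hρ.eventually_ge_atTop 1
    rwa [Filter.eventually_atTop] at this
  set B : ℕ := (DX+1)^M₀ with hB
  have hB1 : 1 ≤ B := Nat.one_le_pow _ _ (Nat.succ_pos _)
  -- fibers of f have at most B elements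
  have hfiber : ∀ (S : Set V) (y : W), ({x ∈ S | f x = y}).ncard ≤ B := by
    intro S y
    rcases Set.eq_empty_or_nonempty {x ∈ S | f x = y} with hemp | ⟨x', hx'⟩
    · simp [hemp]
    · have hsub : {x ∈ S | f x = y} ⊆ gBall X x' M₀ := by
        intro z hz
        have h0 : (Y.dist (f x') (f z) : ℝ) = 0 := by
          rw [hx'.2, hz.2]; simp [SimpleGraph.dist_self]
        have h1 := (hfb x' z).1
        rw [h0] at h1
        have hρ0 : ρ (X.dist x' z) = 0 := by exact_mod_cast le_antisymm (by exact_mod_cast h1) (Nat.zero_le _)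
        have hlt : X.dist x' z < M₀ := by
          by_contra hge
          push_neg at hge
          have := hM₀ _ hge
          omega
        exact le_of_lt hlt
      calc ({x ∈ S | f x = y}).ncard ≤ (gBall X x' M₀).ncard :=
            Set.ncard_le_ncard hsub (gBall_finite_card hXconn hDX x' M₀).1
        _ ≤ B := (gBall_finite_card hXconn hDX x' M₀).2
  -- choose q with (DY+1)^2 ≤ c^q
  obtain ⟨q, hq1, hq2⟩ : ∃ q : ℕ, 1 ≤ q ∧ (((DY:ℝ)+1))^2 ≤ c^q := by
    have h := (tendsto_pow_atTop_atTop_of_one_lt hc).eventually_ge_atTop (((DY:ℝ)+1)^2)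
    rw [Filter.eventually_atTop] at h
    obtain ⟨q, hq⟩ := h
    exact ⟨max 1 q, Nat.le_max_left _ _, hq _ (Nat.le_max_right _ _)⟩
  set K' : ℕ := max 1 ⌈K⌉₊ with hK'
  have hKK' : K ≤ (K' : ℝ) := le_trans (Nat.le_ceil K) (by exact_mod_cast Nat.le_max_right 1 ⌈K⌉₊)
  have hK'1 : 1 ≤ K' := Nat.le_max_left _ _
  set L' : ℝ := max 2 (K*L*q) with hL'
  have hL'1 : 1 < L' := lt_of_lt_of_le one_lt_two (le_max_left _ _)
  -- choose c'
  obtain ⟨c', hc'1, hc'pow⟩ : ∃ c' : ℝ, 1 < c' ∧ c' ^ (2*K') ≤ c := by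
    refine ⟨c ^ (((2*K' : ℕ):ℝ))⁻¹, ?_, ?_⟩
    · rw [Real.one_lt_rpow_iff_of_pos hc0]
      left
      constructor
      · exact hc
      · positivity
    · rw [← Real.rpow_natCast (c ^ (((2*K' : ℕ):ℝ))⁻¹) (2*K'), ← Real.rpow_mul (le_of_lt hc0)]
      rw [inv_mul_cancel₀ (by positivity), Real.rpow_one]
  have hc'0 : (0:ℝ) < c' := lt_trans one_pos hc'1
  refine ⟨0, c', L', le_refl 0, hc'1, hL'1, ?_⟩
  intro s' hs'0
  -- choose the scale s for X
  obtain ⟨Nρ, hNρ⟩ : ∃ N : ℕ, ∀ m ≥ N, ⌈s' + 2*K + 1⌉₊ ≤ ρ m := by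
    have := hρ.eventually_ge_atTop ⌈s' + 2*K + 1⌉₊
    rwa [Filter.eventually_atTop] at this
  set s : ℝ := max s₀ (Nρ : ℝ) with hs
  obtain ⟨C, hC0, hSinf⟩ := hbig s (le_max_left _ _)
  set C' : ℝ := K*C + 2*K with hC'
  have hC'0 : 0 ≤ C' := by
    have h1 : 0 ≤ K*C := mul_nonneg (le_of_lt hK0) hC0
    have h2 : 0 ≤ 2*K := by linarith
    rw [hC']; linarith
  refine ⟨C', hC'0, ?_⟩
  -- threshold
  obtain ⟨N₀, hN₀⟩ : ∃ N₀ : ℕ, ∀ n ≥ N₀, (4:ℝ)*(B:ℝ)^2 ≤ c^n := by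
    have h := (tendsto_pow_atTop_atTop_of_one_lt hc).eventually_ge_atTop ((4:ℝ)*(B:ℝ)^2)
    rwa [Filter.eventually_atTop] at h
  have hK'pos : 0 < K' := hK'1
  -- the key pointwise statement
  have key : ∀ n, (c ^ n : ℝ) ≤ ((bigonSet X x₀ L s C ∩ gBall X x₀ n).ncard : ℝ) → N₀ ≤ n →
      (c' ^ (K'*n) : ℝ) ≤ ((bigonSet Y (f x₀) L' s' C' ∩ gBall Y (f x₀) (K'*n)).ncard : ℝ) := by
    intro n hn1 hn2
    set SX : Set V := bigonSet X x₀ L s C ∩ gBall X x₀ n with hSX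
    have hSXfin : SX.Finite := ((gBall_finite_card hXconn hDX x₀ n).1).subset
      Set.inter_subset_right
    set r : ℕ := n / q with hr
    set Bad : Set V := {x ∈ SX | (Y.dist (f x₀) (f x) : ℝ) ≤ (r:ℝ)} with hBad
    set Good : Set V := SX \ Bad with hGood
    have hBadsub : Bad ⊆ SX := Set.sep_subset _ _
    have hBadfin : Bad.Finite := hSXfin.subset hBadsub
    have hGoodfin : Good.Finite := hSXfin.subset Set.diff_subset
    have h4B : (4:ℝ)*(B:ℝ)^2 ≤ c^n := hN₀ n hn2
    have hcn0 : (0:ℝ) < c^n := by positivity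
    -- (1) Bad is small
    have hBadcard : (Bad.ncard : ℝ) ≤ (B:ℝ) * ((DY:ℝ)+1)^r := by
      have h1 : Bad.ncard ≤ B * (f '' Bad).ncard :=
        ncard_le_mul_ncard_image f hBadfin B (fun y => hfiber Bad y)
      have h2 : (f '' Bad).ncard ≤ (gBall Y (f x₀) r).ncard := by
        apply Set.ncard_le_ncard _ (gBall_finite_card hYconn hDY (f x₀) r).1
        rintro _ ⟨x, hx, rfl⟩
        have := hx.2
        exact_mod_cast this
      have h3 : (gBall Y (f x₀) r).ncard ≤ (DY+1)^r := (gBall_finite_card hYconn hDY (f x₀) r).2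
      have : Bad.ncard ≤ B * (DY+1)^r := le_trans h1 (Nat.mul_le_mul_left _ (le_trans h2 h3))
      calc (Bad.ncard : ℝ) ≤ ((B * (DY+1)^r : ℕ) : ℝ) := by exact_mod_cast this
        _ = (B:ℝ) * ((DY:ℝ)+1)^r := by push_cast; ring
    have hBadhalf : (Bad.ncard : ℝ) ≤ c^n / 2 := by
      have hpow : (((DY:ℝ)+1)^r)^2 ≤ c^n := by
        calc (((DY:ℝ)+1)^r)^2 = (((DY:ℝ)+1)^2)^r := by
              rw [← pow_mul, ← pow_mul, Nat.mul_comm]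
          _ ≤ (c^q)^r := pow_le_pow_left₀ (by positivity) hq2 r
          _ = c^(q*r) := by rw [← pow_mul]
          _ ≤ c^n := by
              apply pow_le_pow_right₀ (le_of_lt hc)
              rw [hr, Nat.mul_comm]
              exact Nat.div_mul_le_self n q
      have hsq : ((2:ℝ) * ((B:ℝ) * ((DY:ℝ)+1)^r))^2 ≤ (c^n)^2 := by
        have hmul : (4*(B:ℝ)^2) * (((DY:ℝ)+1)^r)^2 ≤ (c^n) * (c^n) :=
          mul_le_mul h4B hpow (sq_nonneg _) (le_of_lt hcn0)
        calc ((2:ℝ) * ((B:ℝ) * ((DY:ℝ)+1)^r))^2 = (4*(B:ℝ)^2) * (((DY:ℝ)+1)^r)^2 := by ring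
          _ ≤ (c^n) * (c^n) := hmul
          _ = (c^n)^2 := by ring
      have := le_of_sq_le_sq'' (by positivity) (le_of_lt hcn0) hsq
      linarith
    -- (2) Good is big
    have hGoodcard : c^n / 2 ≤ (Good.ncard : ℝ) := by
      have := Set.ncard_diff_add_ncard_of_subset hBadsub hSXfin
      have hcast : (Good.ncard : ℝ) + (Bad.ncard : ℝ) = (SX.ncard : ℝ) := by
        exact_mod_cast this
      have hn1' : (c ^ n : ℝ) ≤ (SX.ncard : ℝ) := hn1
      linarith
    -- (3) Good maps into Y-bigons
    have hGoodmap : ∀ x ∈ Good, f x ∈ bigonSet Y (f x₀) L' s' C' ∩ gBall Y (f x₀) (K'*n) := by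
      intro x hx
      have hxSX : x ∈ SX := hx.1
      have hxball : X.dist x₀ x ≤ n := hxSX.2
      have hdY : (r:ℝ) < (Y.dist (f x₀) (f x) : ℝ) := by
        by_contra hle
        push_neg at hle
        exact hx.2 ⟨hxSX, hle⟩
      have hdYnat : r < Y.dist (f x₀) (f x) := by exact_mod_cast hdY
      have hnq : (n:ℝ) ≤ (q:ℝ) * (Y.dist (f x₀) (f x) : ℝ) := by
        have hq0 : 0 < q := hq1
        have hdm : q * r + n % q = n := by rw [hr]; exact Nat.div_add_mod n q
        have hml : n % q < q := Nat.mod_lt n hq0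
        have : n ≤ q * Y.dist (f x₀) (f x) := by
          have hstep : q * r + q ≤ q * Y.dist (f x₀) (f x) := by
            have hsucc := Nat.succ_le_of_lt hdYnat
            calc q * r + q = q * (r + 1) := by ring
              _ ≤ q * Y.dist (f x₀) (f x) := Nat.mul_le_mul_left _ hsucc
          omega
        exact_mod_cast this
      have hdY0 : (0:ℝ) ≤ (Y.dist (f x₀) (f x) : ℝ) := by positivity
      constructor
      · -- bigon at f x
        have hbx : IsBigonAt X x₀ L s C x := hxSX.1
        obtain ⟨α₁, α₂, hl₁, hl₂, hfat⟩ := hbx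
        have hlen : ∀ α : X.Walk x₀ x, (α.length : ℝ) ≤ L * (X.dist x₀ x : ℝ) →
            (((mapWalk hYconn f α).length : ℝ)) ≤ L' * (Y.dist (f x₀) (f x) : ℝ) := by
          intro α hl
          have h1 : ((mapWalk hYconn f α).length : ℝ) ≤ K * α.length :=
            mapWalk_length_le hYconn f (le_of_lt hK0) hadjK α
          have h2 : (α.length : ℝ) ≤ L * n := by
            have : (X.dist x₀ x : ℝ) ≤ (n:ℝ) := by exact_mod_cast hxball
            nlinarith
          have h3 : K * L * (q:ℝ) ≤ L' := le_max_right _ _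
          calc ((mapWalk hYconn f α).length : ℝ) ≤ K * α.length := h1
            _ ≤ K * (L * n) := mul_le_mul_of_nonneg_left h2 (le_of_lt hK0)
            _ = (K * L) * n := by ring
            _ ≤ (K * L) * ((q:ℝ) * (Y.dist (f x₀) (f x) : ℝ)) :=
                mul_le_mul_of_nonneg_left hnq (by positivity)
            _ = (K * L * (q:ℝ)) * (Y.dist (f x₀) (f x) : ℝ) := by ring
            _ ≤ L' * (Y.dist (f x₀) (f x) : ℝ) := mul_le_mul_of_nonneg_right h3 hdY0
        refine ⟨mapWalk hYconn f α₁, mapWalk hYconn f α₂, hlen α₁ hl₁, hlen α₂ hl₂, ?_⟩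
        intro u' hu' v' hv' hu'far hv'far
        obtain ⟨u, hu, hdu⟩ := mapWalk_support hYconn f (le_of_lt hK0) hadjK α₁ u' hu'
        obtain ⟨v, hv, hdv⟩ := mapWalk_support hYconn f (le_of_lt hK0) hadjK α₂ v' hv'
        -- transfer farness to X
        have htrans : ∀ (z : V) (w' : W), (Y.dist (f z) w' : ℝ) ≤ K →
            ∀ (p : V), C' < (Y.dist (f p) w' : ℝ) → C < (X.dist p z : ℝ) := by
          intro z w' hzw p hp
          have htri : (Y.dist (f p) w' : ℝ) ≤ (Y.dist (f p) (f z) : ℝ) + (Y.dist (f z) w' : ℝ) := by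
            have := hYconn.dist_triangle (u := f p) (v := f z) (w := w')
            exact_mod_cast this
          have hub : (Y.dist (f p) (f z) : ℝ) ≤ K * (X.dist p z : ℝ) := (hfb p z).2
          have hlin : K*(C+1) < K * (X.dist p z : ℝ) := by
            rw [hC'] at hp; linarith
          have := (mul_lt_mul_iff_right₀ hK0).mp hlin
          linarith
        have hu1 : C < (X.dist x₀ u : ℝ) := htrans u u' hdu x₀ (by
          have := hu'far.1; simpa using this)
        have hu2 : C < (X.dist x u : ℝ) := htrans u u' hdu x (by
          have := hu'far.2; simpa using this)
        have hv1 : C < (X.dist x₀ v : ℝ) := htrans v v' hdv x₀ (by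
          have := hv'far.1; simpa using this)
        have hv2 : C < (X.dist x v : ℝ) := htrans v v' hdv x (by
          have := hv'far.2; simpa using this)
        have hfatuv : s < (X.dist u v : ℝ) := hfat u hu v hv ⟨hu1, hu2⟩ ⟨hv1, hv2⟩
        have hduv : Nρ ≤ X.dist u v := by
          have : (Nρ : ℝ) < (X.dist u v : ℝ) := lt_of_le_of_lt (le_max_right s₀ _) hfatuv
          exact_mod_cast le_of_lt this
        have hρbig : s' + 2*K + 1 ≤ (ρ (X.dist u v) : ℝ) := by
          have h1 := hNρ _ hduv
          calc s' + 2*K + 1 ≤ (⌈s' + 2*K + 1⌉₊ : ℝ) := Nat.le_ceil _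
            _ ≤ (ρ (X.dist u v) : ℝ) := by exact_mod_cast h1
        have hfufv : s' + 2*K + 1 ≤ (Y.dist (f u) (f v) : ℝ) :=
          le_trans hρbig ((hfb u v).1)
        -- triangle inequality in Y
        have htri1 : (Y.dist (f u) (f v) : ℝ) ≤ (Y.dist (f u) u' : ℝ) + (Y.dist u' (f v) : ℝ) := by
          exact_mod_cast hYconn.dist_triangle (u := f u) (v := u') (w := f v)
        have htri2 : (Y.dist u' (f v) : ℝ) ≤ (Y.dist u' v' : ℝ) + (Y.dist v' (f v) : ℝ) := by
          exact_mod_cast hYconn.dist_triangle (u := u') (v := v') (w := f v)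
        have hcomm : (Y.dist v' (f v) : ℝ) = (Y.dist (f v) v' : ℝ) := by
          rw [SimpleGraph.dist_comm]
        linarith
      · -- ball membership
        have h1 : (Y.dist (f x₀) (f x) : ℝ) ≤ K * (X.dist x₀ x : ℝ) := (hfb x₀ x).2
        have h2 : (X.dist x₀ x : ℝ) ≤ (n:ℝ) := by exact_mod_cast hxball
        have h3 : (Y.dist (f x₀) (f x) : ℝ) ≤ (K':ℝ) * (n:ℝ) := by
          calc (Y.dist (f x₀) (f x) : ℝ) ≤ K * (X.dist x₀ x : ℝ) := h1
            _ ≤ K * n := mul_le_mul_of_nonneg_left h2 (le_of_lt hK0)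
            _ ≤ (K':ℝ) * n := mul_le_mul_of_nonneg_right hKK' (by positivity)
        have : Y.dist (f x₀) (f x) ≤ K' * n := by exact_mod_cast h3
        exact this
    -- (4) conclude the count in Y
    have hYfin : (bigonSet Y (f x₀) L' s' C' ∩ gBall Y (f x₀) (K'*n)).Finite :=
      ((gBall_finite_card hYconn hDY (f x₀) (K'*n)).1).subset Set.inter_subset_right
    have h1 : Good.ncard ≤ B * (f '' Good).ncard :=
      ncard_le_mul_ncard_image f hGoodfin B (fun y => hfiber Good y)
    have h2 : (f '' Good).ncard ≤ (bigonSet Y (f x₀) L' s' C' ∩ gBall Y (f x₀) (K'*n)).ncard := by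
      apply Set.ncard_le_ncard _ hYfin
      rintro _ ⟨x, hx, rfl⟩
      exact hGoodmap x hx
    have hcountY : c^n / (2*(B:ℝ)) ≤
        ((bigonSet Y (f x₀) L' s' C' ∩ gBall Y (f x₀) (K'*n)).ncard : ℝ) := by
      have hB0 : (0:ℝ) < (B:ℝ) := by exact_mod_cast hB1
      have hgb : (Good.ncard : ℝ) ≤ (B:ℝ) *
          ((bigonSet Y (f x₀) L' s' C' ∩ gBall Y (f x₀) (K'*n)).ncard : ℝ) := by
        calc (Good.ncard : ℝ) ≤ ((B * (f '' Good).ncard : ℕ) : ℝ) := by exact_mod_cast h1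
          _ ≤ ((B * (bigonSet Y (f x₀) L' s' C' ∩ gBall Y (f x₀) (K'*n)).ncard : ℕ) : ℝ) := by
              exact_mod_cast Nat.mul_le_mul_left _ h2
          _ = (B:ℝ) * _ := by push_cast; ring
      rw [div_le_iff₀ (by positivity)]
      calc c^n ≤ 2 * (Good.ncard : ℝ) := by linarith
        _ ≤ 2 * ((B:ℝ) * ((bigonSet Y (f x₀) L' s' C' ∩ gBall Y (f x₀) (K'*n)).ncard : ℝ)) := by
            linarith
        _ = _ := by ring
    -- (5) the exponent bound
    have hfinal : (c' ^ (K'*n) : ℝ) ≤ c^n / (2*(B:ℝ)) := by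
      have hB0 : (0:ℝ) < (B:ℝ) := by exact_mod_cast hB1
      apply le_of_sq_le_sq'' (by positivity) (by positivity)
      have ha : (c' ^ (K'*n))^2 = (c' ^ (2*K'))^n := by
        rw [← pow_mul, ← pow_mul]; ring_nf
      have hb : (c' ^ (2*K'))^n ≤ c^n := pow_le_pow_left₀ (by positivity) hc'pow n
      have hc2 : c^n ≤ (c^n / (2*(B:ℝ)))^2 := by
        rw [div_pow]
        rw [le_div_iff₀ (by positivity)]
        calc c^n * (2*(B:ℝ))^2 = (4*(B:ℝ)^2) * c^n := by ring
          _ ≤ c^n * c^n := mul_le_mul_of_nonneg_right h4B (le_of_lt hcn0)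
          _ = (c^n)^2 := by ring
      calc (c' ^ (K'*n))^2 = (c' ^ (2*K'))^n := ha
        _ ≤ c^n := hb
        _ ≤ (c^n / (2*(B:ℝ)))^2 := hc2
    exact le_trans hfinal hcountY
  -- assemble infiniteness
  have hS'inf : ({n : ℕ | (c ^ n : ℝ) ≤ ((bigonSet X x₀ L s C ∩ gBall X x₀ n).ncard : ℝ)} \
      {n : ℕ | n < N₀}).Infinite := hSinf.diff (Set.finite_lt_nat N₀)
  have himg : ((fun n => K' * n) '' ({n : ℕ | (c ^ n : ℝ) ≤
      ((bigonSet X x₀ L s C ∩ gBall X x₀ n).ncard : ℝ)} \ {n : ℕ | n < N₀})).Infinite := by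
    apply hS'inf.image
    intro a _ b _ hab
    exact Nat.eq_of_mul_eq_mul_left hK'pos hab
  apply himg.mono
  rintro _ ⟨n, ⟨hn1, hn2⟩, rfl⟩
  simp only [Set.mem_setOf_eq] at hn2 ⊢
  exact key n hn1 (by omega)
end

section
/- Let X be a connected graph of uniformly bounded degree that has exponentially many fat bigons at a base vertex x0. Then for every vertex x0' of X, X has exponentially many fat bigons at x0'. (Hence having exponentially many fat bigons is independent of the choice of basepoint.) -/
open SimpleGraph

/-- Any vertex on a walk is within the walk's length of the start. -/
lemma dist_le_of_mem_support {V : Type*} {G : SimpleGraph V} {a b u : V}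
    (p : G.Walk a b) (hu : u ∈ p.support) : G.dist a u ≤ p.length := by
  classical
  exact le_trans (SimpleGraph.dist_le (p.takeUntil u hu)) (p.length_takeUntil_le hu)

/-- Balls are finite in a connected graph of bounded degree. -/
lemma gBall_finite {V : Type*} (X : SimpleGraph V) (hconn : X.Connected)
    (hdeg : BddDegree X) (x : V) : ∀ n : ℕ, (gBall X x n).Finite := by
  obtain ⟨D, hD⟩ := hdeg
  intro n
  induction n with
  | zero =>
    refine (Set.finite_singleton x).subset ?_
    intro v hv
    have hv' : X.dist x v = 0 := Nat.le_zero.mp hv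
    simp [hconn.dist_eq_zero_iff.mp hv']
  | succ n ih =>
    have hsub : gBall X x (n + 1) ⊆
        gBall X x n ∪ ⋃ w ∈ gBall X x n, X.neighborSet w := by
      intro u hu
      rcases le_or_gt (X.dist x u) n with hle | hlt
      · exact Or.inl hle
      · have heq : X.dist u x = n + 1 := by
          rw [SimpleGraph.dist_comm]
          have : X.dist x u ≤ n + 1 := hu
          omega
        obtain ⟨p, hp⟩ := (hconn u x).exists_walk_length_eq_dist
        rw [heq] at hp
        cases p with
        | nil => simp at hp
        | @cons _ w _ hadj q =>
          have hql : q.length = n := by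
            simpa [SimpleGraph.Walk.length_cons] using hp
          have hw : w ∈ gBall X x n := by
            have : X.dist x w ≤ q.length := by
              rw [SimpleGraph.dist_comm]; exact SimpleGraph.dist_le q
            simpa [gBall, hql] using this
          exact Or.inr (Set.mem_biUnion hw hadj.symm)
    exact (ih.union (ih.biUnion fun w _ =>
      Set.finite_of_encard_le_coe (hD w))).subset hsub

/-- Having exponentially many fat bigons is independent of the basepoint. -/
theorem hasExpManyFatBigons_basepoint_invariant
    {V : Type*} (X : SimpleGraph V)
    (hXconn : X.Connected) (hXdeg : BddDegree X)
    (x₀ : V) (h : HasExpManyFatBigons X x₀) :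
    ∀ x₀' : V, HasExpManyFatBigons X x₀' := by
  intro x₀'
  obtain ⟨s₀, c, L, hs₀, hc, hL, hmain⟩ := h
  set d : ℕ := X.dist x₀' x₀ with hd
  have hc0 : (0:ℝ) ≤ c := le_of_lt (lt_trans one_pos hc)
  have hsc : 1 < Real.sqrt c := by
    calc (1:ℝ) = Real.sqrt 1 := by simp
    _ < Real.sqrt c := Real.sqrt_lt_sqrt (by norm_num) hc
  have hL' : 1 < L + (L + 1) * (d : ℝ) := by
    have : (0:ℝ) ≤ (L + 1) * d := by positivity
    linarith
  refine ⟨s₀, Real.sqrt c, L + (L + 1) * (d : ℝ), hs₀, hsc, hL', ?_⟩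
  intro s hs
  obtain ⟨C, hC0, hinf⟩ := hmain s hs
  refine ⟨C + d, by positivity, ?_⟩
  -- the key inclusion
  have hkey : ∀ n : ℕ, bigonSet X x₀ L s C ∩ gBall X x₀ n ⊆
      bigonSet X x₀' (L + (L + 1) * (d : ℝ)) s (C + d) ∩ gBall X x₀' (n + d) := by
    intro n x hx
    obtain ⟨hxB, hxball⟩ := hx
    have hball : x ∈ gBall X x₀' (n + d) := by
      have htr : X.dist x₀' x ≤ X.dist x₀' x₀ + X.dist x₀ x := hXconn.dist_triangle
      have : X.dist x₀ x ≤ n := hxball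
      show X.dist x₀' x ≤ n + d
      omega
    refine ⟨?_, hball⟩
    by_cases hxx : x = x₀'
    · subst hxx
      refine ⟨SimpleGraph.Walk.nil, SimpleGraph.Walk.nil,
        by simp [SimpleGraph.dist_self], by simp [SimpleGraph.dist_self], ?_⟩
      intro u hu v hv h1 h2
      simp only [SimpleGraph.Walk.support_nil, List.mem_singleton] at hu
      subst hu
      rw [SimpleGraph.dist_self] at h1
      have : (0:ℝ) ≤ C + d := by positivity
      exact absurd h1.1 (by push_cast; linarith)
    · obtain ⟨α₁, α₂, h1, h2, hsep⟩ := hxB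
      obtain ⟨γ, hγ⟩ := hXconn.exists_walk_length_eq_dist x₀' x₀
      have hD1 : 1 ≤ X.dist x₀' x := hXconn.pos_dist_of_ne (Ne.symm hxx)
      have htri : X.dist x₀ x ≤ d + X.dist x₀' x := by
        have h1 := hXconn.dist_triangle (u := x₀) (v := x₀') (w := x)
        have h2 : X.dist x₀ x₀' = X.dist x₀' x₀ := SimpleGraph.dist_comm
        omega
      have hlen : ∀ α : X.Walk x₀ x, (α.length : ℝ) ≤ L * X.dist x₀ x →
          (((γ.append α).length : ℝ)) ≤ (L + (L + 1) * (d : ℝ)) * X.dist x₀' x := by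
        intro α hα
        rw [SimpleGraph.Walk.length_append]
        push_cast
        have hγl : (γ.length : ℝ) = (d : ℝ) := by exact_mod_cast congrArg Nat.cast hγ
        have htri' : (X.dist x₀ x : ℝ) ≤ (d : ℝ) + X.dist x₀' x := by exact_mod_cast htri
        have hD1' : (1:ℝ) ≤ X.dist x₀' x := by exact_mod_cast hD1
        have hLpos : (0:ℝ) < L := lt_trans one_pos hL
        nlinarith [mul_le_mul_of_nonneg_left htri' (le_of_lt hLpos),
          mul_le_mul_of_nonneg_left hD1' (mul_nonneg (by linarith : (0:ℝ) ≤ L + 1)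
            (Nat.cast_nonneg d))]
      have hmem : ∀ {u : V} {α : X.Walk x₀ x}, u ∈ (γ.append α).support →
          (C + (d:ℝ) < X.dist x₀' u ∧ C + (d:ℝ) < X.dist x u) →
          u ∈ α.support ∧ ((C : ℝ) < X.dist x₀ u ∧ (C:ℝ) < X.dist x u) := by
        intro u α hu hcond
        rcases (SimpleGraph.Walk.mem_support_append_iff _ _).mp hu with huγ | huα
        · exfalso
          have : X.dist x₀' u ≤ γ.length := dist_le_of_mem_support γ huγ
          rw [hγ] at this
          have : (X.dist x₀' u : ℝ) ≤ (d : ℝ) := by exact_mod_cast this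
          linarith [hcond.1, hC0]
        · refine ⟨huα, ?_, hcond.2.trans_le' (by linarith [Nat.cast_nonneg (α := ℝ) d])⟩
          have htr : X.dist x₀' u ≤ d + X.dist x₀ u := by
            have := hXconn.dist_triangle (u := x₀') (v := x₀) (w := u); omega
          have htr' : (X.dist x₀' u : ℝ) ≤ (d : ℝ) + X.dist x₀ u := by exact_mod_cast htr
          linarith [hcond.1]
      refine ⟨γ.append α₁, γ.append α₂, hlen α₁ h1, hlen α₂ h2, ?_⟩
      intro u hu v hv hcu hcv
      obtain ⟨hu', hcu'⟩ := hmem hu hcu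
      obtain ⟨hv', hcv'⟩ := hmem hv hcv
      exact hsep u hu' v hv' hcu' hcv'
  -- counting
  have hsubset : (fun n => n + d) '' ({n : ℕ |
        (c ^ n : ℝ) ≤ ((bigonSet X x₀ L s C ∩ gBall X x₀ n).ncard : ℝ)} ∩ Set.Ici d) ⊆
      {m : ℕ | (Real.sqrt c ^ m : ℝ) ≤
        ((bigonSet X x₀' (L + (L + 1) * (d : ℝ)) s (C + d) ∩ gBall X x₀' m).ncard : ℝ)} := by
    rintro m ⟨n, ⟨hn, hnd⟩, rfl⟩
    have hnd' : d ≤ n := hnd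
    have hfin : (bigonSet X x₀' (L + (L + 1) * (d : ℝ)) s (C + d) ∩
        gBall X x₀' (n + d)).Finite :=
      (gBall_finite X hXconn hXdeg x₀' (n + d)).subset Set.inter_subset_right
    have hcard : (bigonSet X x₀ L s C ∩ gBall X x₀ n).ncard ≤
        (bigonSet X x₀' (L + (L + 1) * (d : ℝ)) s (C + d) ∩ gBall X x₀' (n + d)).ncard :=
      Set.ncard_le_ncard (hkey n) hfin
    have hpow : Real.sqrt c ^ (n + d) ≤ (c : ℝ) ^ n := by
      have h2n : Real.sqrt c ^ (n + d) ≤ Real.sqrt c ^ (2 * n) :=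
        pow_le_pow_right₀ (le_of_lt hsc) (by omega : n + d ≤ 2 * n)
      calc Real.sqrt c ^ (n + d) ≤ Real.sqrt c ^ (2 * n) := h2n
      _ = (Real.sqrt c ^ 2) ^ n := by rw [← pow_mul]
      _ = c ^ n := by rw [Real.sq_sqrt hc0]
    calc Real.sqrt c ^ (n + d) ≤ (c:ℝ) ^ n := hpow
    _ ≤ ((bigonSet X x₀ L s C ∩ gBall X x₀ n).ncard : ℝ) := hn
    _ ≤ _ := by exact_mod_cast hcard
  refine Set.Infinite.mono hsubset ?_
  refine Set.Infinite.image ?_ ?_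
  · exact fun a _ b _ hab => by omega
  · exact ((hinf.diff (Set.finite_Iio d)).mono (by
      intro n hn
      exact ⟨hn.1, Set.mem_Ici.mpr (not_lt.mp hn.2)⟩))
end

section
/- Let X be a δ-hyperbolic connected graph of uniformly bounded degree (δ ≥ 1). Then X has no fat bigons: for every L ≥ 1 there exists s ≥ 0 such that for every C ≥ 0 the set B^X(L,s,C) is a bounded subset of X. -/
open SimpleGraph


namespace FatBigon
variable {V : Type*} {G : SimpleGraph V}

/-- Take the first `n` darts of a walk. -/
def wtake : {u v : V} → (p : G.Walk u v) → (n : ℕ) → G.Walk u (p.getVert n)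
  | _, _, .nil, _ => .nil
  | _, _, .cons _ _, 0 => .nil
  | _, _, .cons h q, (n+1) => .cons h (wtake q n)

/-- Drop the first `n` darts of a walk. -/
def wdrop : {u v : V} → (p : G.Walk u v) → (n : ℕ) → G.Walk (p.getVert n) v
  | _, _, .nil, _ => .nil
  | _, _, .cons h q, 0 => .cons h q
  | _, _, .cons _ q, (n+1) => wdrop q n

@[simp] lemma wtake_length {u v : V} (p : G.Walk u v) (n : ℕ) :
    (wtake p n).length = min n p.length := by
  induction p generalizing n with
  | nil => simp [wtake]
  | cons h q ih =>
    cases n with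
    | zero => simp [wtake]; rfl
    | succ n => simp [wtake, ih, Nat.succ_min_succ]

@[simp] lemma wdrop_length {u v : V} (p : G.Walk u v) (n : ℕ) :
    (wdrop p n).length = p.length - n := by
  induction p generalizing n with
  | nil => simp [wdrop]
  | cons h q ih =>
    cases n with
    | zero => simp [wdrop]; rfl
    | succ n => simpa [wdrop] using ih n

lemma wtake_support_subset {u v : V} (p : G.Walk u v) (n : ℕ) :
    (wtake p n).support ⊆ p.support := by
  induction p generalizing n with
  | nil => cases n <;> simp [wtake]
  | cons h q ih =>
    cases n with
    | zero =>
      intro z hz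
      simp [wtake] at hz
      exact List.mem_cons.mpr (Or.inl (List.mem_singleton.mp hz))
    | succ n =>
      intro z hz
      simp only [wtake] at hz
      simp only [Walk.support_cons, List.mem_cons]
      change z ∈ _ :: (wtake q n).support at hz
      rw [List.mem_cons] at hz
      rcases hz with hz | hz
      · exact Or.inl hz
      · exact Or.inr (ih n hz)

lemma wdrop_support_subset {u v : V} (p : G.Walk u v) (n : ℕ) :
    (wdrop p n).support ⊆ p.support := by
  induction p generalizing n with
  | nil => cases n <;> simp [wdrop, Walk.getVert]
  | cons h q ih =>
    cases n with
    | zero => simp [wdrop]; exact fun z hz => hz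
    | succ n =>
      intro z hz
      simp only [wdrop] at hz
      simp only [Walk.support_cons, List.mem_cons]
      exact Or.inr (ih n hz)

lemma wdrop_getVert {u v : V} (p : G.Walk u v) (n i : ℕ) :
    (wdrop p n).getVert i = p.getVert (n + i) := by
  induction p generalizing n with
  | nil => simp [wdrop, Walk.getVert]
  | cons h q ih =>
    cases n with
    | zero => simp [wdrop]; rfl
    | succ n =>
      simp only [wdrop, Nat.succ_add]
      exact ih n

lemma wtake_getVert {u v : V} (p : G.Walk u v) (n i : ℕ) (hi : i ≤ n) :
    (wtake p n).getVert i = p.getVert i := by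
  induction p generalizing n i with
  | nil => simp [wtake, Walk.getVert]
  | cons h q ih =>
    cases n with
    | zero =>
      interval_cases i
      simp [wtake]; rfl
    | succ n =>
      cases i with
      | zero => simp [wtake]
      | succ i =>
        simp only [wtake, Walk.getVert_cons_succ]
        exact ih n i (Nat.succ_le_succ_iff.mp hi)

lemma getVert_mem_support {u v : V} (p : G.Walk u v) (n : ℕ) :
    p.getVert n ∈ p.support := by
  by_cases hn : n ≤ p.length
  · exact Walk.mem_support_iff_exists_getVert.mpr ⟨n, rfl, hn⟩
  · rw [p.getVert_of_length_le (le_of_not_ge hn)]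
    exact Walk.end_mem_support p

section Geo
variable (hconn : G.Connected)

include hconn in
lemma geodesic_getVert_dist {x y : V} {γ : G.Walk x y} (hγ : γ.length = G.dist x y)
    {i j : ℕ} (hij : i ≤ j) (hj : j ≤ γ.length) :
    G.dist (γ.getVert i) (γ.getVert j) = j - i := by
  have hupper : G.dist (γ.getVert i) (γ.getVert j) ≤ j - i := by
    have hseg : ((wdrop γ i).getVert (j - i)) = γ.getVert j := by
      rw [wdrop_getVert]; congr 1; omega
    have := G.dist_le ((wtake (wdrop γ i) (j - i)).copy rfl hseg)
    have hlen : ((wtake (wdrop γ i) (j - i)).copy rfl hseg).length ≤ j - i := by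
      rw [Walk.length_copy, wtake_length]
      omega
    omega
  have h1 : G.dist x (γ.getVert i) ≤ i := by
    have := G.dist_le (wtake γ i)
    rw [wtake_length] at this
    omega
  have h2 : G.dist (γ.getVert j) y ≤ γ.length - j := by
    have := G.dist_le (wdrop γ j)
    rw [wdrop_length] at this
    omega
  have htri : G.dist x y ≤ G.dist x (γ.getVert i) + G.dist (γ.getVert i) (γ.getVert j)
      + G.dist (γ.getVert j) y :=
    le_trans (hconn.dist_triangle (v := γ.getVert j))
      (by
        have := hconn.dist_triangle (u := x) (v := γ.getVert i) (w := γ.getVert j)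
        omega)
  omega

include hconn in
lemma geodesic_subwalk {x y : V} {γ : G.Walk x y} (hγ : γ.length = G.dist x y)
    {i j : ℕ} (hij : i ≤ j) (hj : j ≤ γ.length) :
    ∃ σ : G.Walk (γ.getVert i) (γ.getVert j),
      σ.length = G.dist (γ.getVert i) (γ.getVert j) ∧
      ∀ t, i ≤ t → t ≤ j → γ.getVert t ∈ σ.support := by
  have hseg : ((wdrop γ i).getVert (j - i)) = γ.getVert j := by
    rw [wdrop_getVert]; congr 1; omega
  refine ⟨(wtake (wdrop γ i) (j - i)).copy rfl hseg, ?_, ?_⟩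
  · rw [Walk.length_copy, wtake_length, wdrop_length, geodesic_getVert_dist hconn hγ hij hj]
    omega
  · intro t ht1 ht2
    rw [Walk.support_copy]
    have hgv : (wtake (wdrop γ i) (j - i)).getVert (t - i) = γ.getVert t := by
      rw [wtake_getVert _ _ _ (by omega), wdrop_getVert]; congr 1; omega
    rw [← hgv]; exact getVert_mem_support _ _

end Geo

section Thin
variable {δ₀ : ℕ} (hconn : G.Connected)
variable (thin : ∀ ⦃a b c : V⦄ (γ₁ : G.Walk a b) (γ₂ : G.Walk b c) (γ₃ : G.Walk c a),
    γ₁.length = G.dist a b → γ₂.length = G.dist b c → γ₃.length = G.dist c a →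
    ∀ u ∈ γ₁.support, ∃ v, (v ∈ γ₂.support ∨ v ∈ γ₃.support) ∧ G.dist u v ≤ δ₀)

include hconn thin in
lemma lemmaA : ∀ (k : ℕ) {a b : V} (p : G.Walk a b) (γ : G.Walk a b),
    γ.length = G.dist a b → p.length ≤ 2 ^ k →
    ∀ z ∈ γ.support, ∃ w ∈ p.support, G.dist z w ≤ δ₀ * k := by
  intro k
  induction k with
  | zero =>
    intro a b p γ hγ hp z hz
    obtain ⟨n, hn, hnle⟩ := Walk.mem_support_iff_exists_getVert.mp hz
    have hγ1 : γ.length ≤ 1 := by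
      have := G.dist_le p; omega
    rcases Nat.eq_zero_or_pos n with h0 | h1
    · subst h0; rw [Walk.getVert_zero] at hn
      exact ⟨a, p.start_mem_support, by simp [← hn]⟩
    · have hb : γ.getVert n = b := γ.getVert_of_length_le (by omega)
      rw [hb] at hn
      exact ⟨b, p.end_mem_support, by simp [← hn]⟩
  | succ k ih =>
    intro a b p γ hγ hp z hz
    set j := (p.length + 1) / 2 with hj
    obtain ⟨σ₁, hσ₁⟩ := hconn.exists_walk_length_eq_dist a (p.getVert j)
    obtain ⟨σ₂, hσ₂⟩ := hconn.exists_walk_length_eq_dist (p.getVert j) b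
    have hσ₂r : (σ₂.reverse).length = G.dist b (p.getVert j) := by
      rw [Walk.length_reverse, hσ₂, G.dist_comm]
    have hσ₁r : (σ₁.reverse).length = G.dist (p.getVert j) a := by
      rw [Walk.length_reverse, hσ₁, G.dist_comm]
    obtain ⟨v, hv, hvd⟩ := thin γ σ₂.reverse σ₁.reverse hγ hσ₂r hσ₁r z hz
    have h2k : 2 ^ (k+1) = 2 * 2 ^ k := by ring
    rw [h2k] at hp
    rcases hv with hv | hv
    · rw [Walk.support_reverse, List.mem_reverse] at hv
      obtain ⟨w, hw, hwd⟩ := ih (wdrop p j) σ₂ hσ₂ (by rw [wdrop_length]; omega) v hv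
      refine ⟨w, wdrop_support_subset _ _ hw, ?_⟩
      have htri := hconn.dist_triangle (u := z) (v := v) (w := w)
      have : G.dist z w ≤ δ₀ + δ₀ * k := by omega
      calc G.dist z w ≤ δ₀ + δ₀ * k := this
        _ = δ₀ * (k+1) := by ring
    · rw [Walk.support_reverse, List.mem_reverse] at hv
      obtain ⟨w, hw, hwd⟩ := ih (wtake p j) σ₁ hσ₁ (by rw [wtake_length]; omega) v hv
      refine ⟨w, wtake_support_subset _ _ hw, ?_⟩
      have htri := hconn.dist_triangle (u := z) (v := v) (w := w)
      have : G.dist z w ≤ δ₀ + δ₀ * k := by omega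
      calc G.dist z w ≤ δ₀ + δ₀ * k := this
        _ = δ₀ * (k+1) := by ring

include hconn thin in
lemma lemmaC {a b : V} (p : G.Walk a b) (γ : G.Walk a b) {k : ℕ}
    (hγ : γ.length = G.dist a b) {z : V} (hz : z ∈ γ.support)
    (hfar : ∀ w ∈ p.support, δ₀ * k < G.dist z w) :
    2 ^ k < p.length := by
  by_contra hle
  push_neg at hle
  obtain ⟨w, hw, hwd⟩ := lemmaA hconn thin k p γ hγ hle z hz
  exact absurd hwd (not_le.mpr (hfar w hw))

include hconn thin in
lemma tubeClaim (hδ₀ : 1 ≤ δ₀) {x y : V} (γ : G.Walk x y) (hγ : γ.length = G.dist x y) :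
    ∀ n : ℕ, ∀ m' A B : ℕ, ∀ {a' b' : V}, ∀ e : G.Walk a' b',
    8 ≤ m' → 100 * (δ₀ * m') ≤ 2 ^ m' →
    A + n = B → B ≤ γ.length →
    (∀ v ∈ e.support, ∀ t, A ≤ t → t ≤ B → δ₀ * m' < G.dist v (γ.getVert t)) →
    (∃ τ, τ ≤ A ∧ G.dist a' (γ.getVert τ) ≤ 4 * (δ₀ * m')) →
    (∃ τ, B ≤ τ ∧ τ ≤ γ.length ∧ G.dist b' (γ.getVert τ) ≤ 4 * (δ₀ * m')) →
    10 * (δ₀ * m') + 2 ≤ n →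
    (n + 1) * 2 ^ m' ≤ 200 * (δ₀ * m') * e.length := by
  intro n
  induction n using Nat.strong_induction_on with
  | _ n IH =>
    intro m' A B a' b' e hm8 hP hAB hBd h1 h2 h3 hn
    classical
    set c := δ₀ * m' with hc
    have hc8 : 8 ≤ c := le_trans hm8 (Nat.le_mul_of_pos_left _ hδ₀)
    by_cases hbase : n ≤ 174 * c + 6
    · -- BASE CASE
      obtain ⟨τ₁, hτ₁A, hτ₁d⟩ := h2
      obtain ⟨τ₂, hτ₂B, hτ₂d, hτ₂dist⟩ := h3
      obtain ⟨cap₁, hcap₁⟩ := hconn.exists_walk_length_eq_dist (γ.getVert τ₁) a'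
      obtain ⟨cap₂, hcap₂⟩ := hconn.exists_walk_length_eq_dist b' (γ.getVert τ₂)
      have hcap₁len : cap₁.length ≤ 4 * c := by
        rw [hcap₁, G.dist_comm]; exact hτ₁d
      have hcap₂len : cap₂.length ≤ 4 * c := hcap₂.le.trans hτ₂dist
      set P := cap₁.append (e.append cap₂) with hPdef
      set tm := A + 5 * c + 1 with htm
      have htτ : τ₁ ≤ tm := by omega
      have htm2 : tm ≤ τ₂ := by omega
      have hτ₂len : τ₂ ≤ γ.length := hτ₂d
      obtain ⟨σ, hσgeo, hσmem⟩ := geodesic_subwalk hconn hγ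
        (i := τ₁) (j := τ₂) (by omega) hτ₂len
      have hzmem : γ.getVert tm ∈ σ.support := hσmem tm htτ htm2
      have hd1 : G.dist (γ.getVert τ₁) (γ.getVert tm) = tm - τ₁ :=
        geodesic_getVert_dist hconn hγ htτ (by omega)
      have hd2 : G.dist (γ.getVert tm) (γ.getVert τ₂) = τ₂ - tm :=
        geodesic_getVert_dist hconn hγ htm2 hτ₂len
      have hfar : ∀ w ∈ P.support, δ₀ * m' < G.dist (γ.getVert tm) w := by
        intro w hw
        rw [hPdef, Walk.mem_support_append_iff, Walk.mem_support_append_iff] at hw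
        rcases hw with hw | hw | hw
        · -- w on cap₁ : within 4c of γ.getVert τ₁
          obtain ⟨i, hiv, hile⟩ := Walk.mem_support_iff_exists_getVert.mp hw
          have hdw : G.dist (γ.getVert τ₁) w ≤ 4 * c := by
            have := G.dist_le (wtake cap₁ i)
            rw [wtake_length] at this
            rw [← hiv]
            exact le_trans this (by omega)
          have htri := hconn.dist_triangle (u := γ.getVert τ₁) (v := γ.getVert tm)
            (w := w)
          have htri2 := hconn.dist_triangle (u := γ.getVert τ₁) (v := w)
            (w := γ.getVert tm)
          have hcm : G.dist w (γ.getVert tm) = G.dist (γ.getVert tm) w := G.dist_comm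
          omega
        · -- w on e
          rw [G.dist_comm]
          exact h1 w hw tm (by omega) (by omega)
        · -- w on cap₂ : within 4c of γ.getVert τ₂
          obtain ⟨i, hiv, hile⟩ := Walk.mem_support_iff_exists_getVert.mp hw
          have hdw : G.dist w (γ.getVert τ₂) ≤ 4 * c := by
            have := G.dist_le (wdrop cap₂ i)
            rw [wdrop_length] at this
            rw [← hiv]
            exact le_trans this (by omega)
          have htri := hconn.dist_triangle (u := γ.getVert tm) (v := w)
            (w := γ.getVert τ₂)
          omega
      have hPlen := lemmaC hconn thin P σ hσgeo hzmem hfar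
      have hePlen : P.length = cap₁.length + e.length + cap₂.length := by
        rw [hPdef, Walk.length_append, Walk.length_append]; ring
      -- arithmetic
      set E := 2 ^ m' with hE2
      have hel : E + 1 ≤ e.length + 8 * c := by omega
      have h175 : n + 1 ≤ 175 * c := by omega
      have h56 : 56 * c ≤ e.length := by omega
      have hel' : E ≤ e.length + 8 * c := by omega
      calc (n + 1) * E ≤ (175 * c) * E := Nat.mul_le_mul_right _ h175
        _ ≤ 175 * c * (e.length + 8 * c) := Nat.mul_le_mul_left _ hel'
        _ = 175 * c * e.length + 1400 * (c * c) := by ring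
        _ ≤ 175 * c * e.length + 25 * c * e.length := by
            have h56c : 25 * c * (56 * c) ≤ 25 * c * e.length := Nat.mul_le_mul_left _ h56
            have heq : 25 * c * (56 * c) = 1400 * (c * c) := by ring
            omega
        _ = 200 * c * e.length := by ring
    · -- RECURSIVE CASE
      push_neg at hbase
      obtain ⟨τ₁, hτ₁A, hτ₁d⟩ := h2
      obtain ⟨τ₂, hτ₂B, hτ₂len, hτ₂dist⟩ := h3
      set lo := A + n / 3 with hlo
      set hi := B - n / 3 with hhi
      have hn3 : 58 * c + 2 ≤ n / 3 := by omega
      have hBlen : B ≤ γ.length := hBd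
      by_cases hmid : ∃ jj, jj ≤ e.length ∧ ∃ τ, lo ≤ τ ∧ τ ≤ hi ∧
          G.dist (e.getVert jj) (γ.getVert τ) ≤ 4 * c
      · -- CASE 1 : split at a mid-low vertex
        obtain ⟨jj, hjje, τ, hτlo, hτhi, hτd⟩ := hmid
        have hlen1 : (wtake e jj).length = jj := by rw [wtake_length]; omega
        have hlen2 : (wdrop e jj).length = e.length - jj := by rw [wdrop_length]
        have hr1 := IH (τ - A) (by omega) m' A τ (wtake e jj) hm8 hP (by omega) (by omega)
          (fun v hv t ht1 ht2 => h1 v (wtake_support_subset _ _ hv) t ht1 (by omega))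
          ⟨τ₁, hτ₁A, hτ₁d⟩ ⟨τ, le_refl τ, by omega, hτd⟩ (by omega)
        have hr2 := IH (B - τ) (by omega) m' τ B (wdrop e jj) hm8 hP (by omega) (by omega)
          (fun v hv t ht1 ht2 => h1 v (wdrop_support_subset _ _ hv) t (by omega) ht2)
          ⟨τ, le_refl τ, hτd⟩ ⟨τ₂, hτ₂B, hτ₂len, hτ₂dist⟩ (by omega)
        rw [hlen1] at hr1
        rw [hlen2] at hr2
        have hsum : (τ - A + 1) + (B - τ + 1) = n + 2 := by omega
        calc (n + 1) * 2 ^ m' ≤ (n + 2) * 2 ^ m' := Nat.mul_le_mul_right _ (by omega)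
          _ = ((τ - A + 1) + (B - τ + 1)) * 2 ^ m' := by rw [hsum]
          _ = (τ - A + 1) * 2 ^ m' + (B - τ + 1) * 2 ^ m' := add_mul _ _ _
          _ ≤ 200 * c * jj + 200 * c * (e.length - jj) := add_le_add hr1 hr2
          _ = 200 * c * (jj + (e.length - jj)) := (Nat.mul_add _ _ _).symm
          _ = 200 * c * e.length := by congr 1; omega
      · -- CASE 2 : pass to a higher tube
        push_neg at hmid
        set LowL := fun j => ∃ τ, τ < lo ∧ G.dist (e.getVert j) (γ.getVert τ) ≤ 4 * c
          with hLowL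
        set LowR := fun j => ∃ τ, hi < τ ∧ τ ≤ γ.length ∧
          G.dist (e.getVert j) (γ.getVert τ) ≤ 4 * c with hLowR
        have hL0 : LowL 0 := ⟨τ₁, by omega, by rw [Walk.getVert_zero]; exact hτ₁d⟩
        have hRlen : LowR e.length := ⟨τ₂, by omega, hτ₂len, by
          rw [Walk.getVert_length]; exact hτ₂dist⟩
        set j₁ := Nat.findGreatest LowL e.length with hj₁def
        have hj₁P : LowL j₁ := Nat.findGreatest_spec (Nat.zero_le _) hL0
        have hj₁le : j₁ ≤ e.length := Nat.findGreatest_le _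
        obtain ⟨τL, hτLlo, hτLd⟩ := hj₁P
        -- j₁ < e.length
        have hj₁lt : j₁ < e.length := by
          rcases Nat.lt_or_ge j₁ e.length with h | h
          · exact h
          · exfalso
            have hj₁eq : j₁ = e.length := le_antisymm hj₁le h
            obtain ⟨τR0, hτR0, hτR0len, hτR0d⟩ := hRlen
            rw [← hj₁eq] at hτR0d
            have hgd : G.dist (γ.getVert τL) (γ.getVert τR0) = τR0 - τL :=
              geodesic_getVert_dist hconn hγ (by omega) hτR0len
            have ht1 := hconn.dist_triangle (u := γ.getVert τL) (v := e.getVert j₁)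
              (w := γ.getVert τR0)
            have hcm : G.dist (γ.getVert τL) (e.getVert j₁)
                = G.dist (e.getVert j₁) (γ.getVert τL) := G.dist_comm
            omega
        have hexR : ∃ j, j₁ < j ∧ j ≤ e.length ∧ LowR j := ⟨e.length, hj₁lt, le_refl _, hRlen⟩
        set j₂ := Nat.find hexR with hj₂def
        obtain ⟨hj₁j₂, hj₂le, hj₂P⟩ := Nat.find_spec hexR
        obtain ⟨τR, hτRhi, hτRlen, hτRd⟩ := hj₂P
        -- the middle subwalk
        have hend : (wdrop e j₁).getVert (j₂ - j₁) = e.getVert j₂ := by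
          rw [wdrop_getVert]; congr 1; omega
        set e' := (wtake (wdrop e j₁) (j₂ - j₁)).copy rfl hend with he'def
        have he'len : e'.length = j₂ - j₁ := by
          rw [Walk.length_copy, wtake_length, wdrop_length]; omega
        have he'get : ∀ i, i ≤ j₂ - j₁ → e'.getVert i = e.getVert (j₁ + i) := by
          intro i hile
          rw [he'def, Walk.getVert_copy, wtake_getVert _ _ _ hile, wdrop_getVert]
        set A' := lo + (8 * c + 1) with hA'
        set B' := hi - (8 * c + 1) with hB'
        set n' := B' - A' with hn'
        have hihl : n / 3 ≤ hi - lo := by omega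
        have hn'lb : 42 * c ≤ n' := by omega
        have hn'n : n' < n := by omega
        have hE8 : 2 ^ 8 ≤ 2 ^ m' := Nat.pow_le_pow_right (by norm_num) hm8
        have hP'' : 100 * (δ₀ * (4 * m')) ≤ 2 ^ (4 * m') := by
          have h4 : 4 ≤ 2 ^ m' := by omega
          have h24 : 2 ^ (4 * m') = (2 ^ m' * 2 ^ m') * (2 ^ m' * 2 ^ m') := by
            rw [show 4 * m' = (m' + m') + (m' + m') by ring, pow_add, pow_add]
          calc 100 * (δ₀ * (4 * m')) = 4 * (100 * (δ₀ * m')) := by ring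
            _ ≤ 4 * 2 ^ m' := Nat.mul_le_mul_left _ hP
            _ ≤ 2 ^ m' * 2 ^ m' := Nat.mul_le_mul_right _ h4
            _ ≤ (2 ^ m' * 2 ^ m') * (2 ^ m' * 2 ^ m') :=
                Nat.le_mul_of_pos_right _ (by positivity)
            _ = 2 ^ (4 * m') := h24.symm
        have h4c : δ₀ * (4 * m') = 4 * c := by rw [hc]; ring
        have hr := IH n' hn'n (4 * m') A' B' e' (by omega) hP'' (by omega) (by omega)
          ?_ ?_ ?_ (by omega)
        · -- conclude from hr
          rw [he'len] at hr
          have h32 : 32 ≤ 2 ^ (3 * m') := by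
            calc (32 : ℕ) = 2 ^ 5 := by norm_num
              _ ≤ 2 ^ (3 * m') := Nat.pow_le_pow_right (by norm_num) (by omega)
          have hkey : 4 * (n + 1) ≤ (n' + 1) * 2 ^ (3 * m') := by
            have hlin : 4 * (n + 1) ≤ 32 * (n' + 1) := by omega
            calc 4 * (n + 1) ≤ 32 * (n' + 1) := hlin
              _ ≤ 2 ^ (3 * m') * (n' + 1) := Nat.mul_le_mul_right _ h32
              _ = (n' + 1) * 2 ^ (3 * m') := Nat.mul_comm _ _
          have hchain : 4 * ((n + 1) * 2 ^ m') ≤ (n' + 1) * 2 ^ (4 * m') := by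
            calc 4 * ((n + 1) * 2 ^ m') = (4 * (n + 1)) * 2 ^ m' := by ring
              _ ≤ ((n' + 1) * 2 ^ (3 * m')) * 2 ^ m' := Nat.mul_le_mul_right _ hkey
              _ = (n' + 1) * (2 ^ (3 * m') * 2 ^ m') := by ring
              _ = (n' + 1) * 2 ^ (4 * m') := by rw [← pow_add]; congr 1; ring
          have hfin : (n' + 1) * 2 ^ (4 * m') ≤ 4 * (200 * c * e.length) := by
            calc (n' + 1) * 2 ^ (4 * m') ≤ 200 * (δ₀ * (4 * m')) * (j₂ - j₁) := hr
              _ ≤ 200 * (δ₀ * (4 * m')) * e.length := Nat.mul_le_mul_left _ (by omega)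
              _ = 4 * (200 * c * e.length) := by rw [hc]; ring
          exact Nat.le_of_mul_le_mul_left (le_trans hchain hfin) (by norm_num)
        · -- h1''
          intro v hv t ht1 ht2
          obtain ⟨i, hiv, hile⟩ := Walk.mem_support_iff_exists_getVert.mp hv
          rw [he'len] at hile
          rw [he'get i hile] at hiv
          have h4c : 4 * c < G.dist (e.getVert (j₁ + i)) (γ.getVert t) :=
            hmid (j₁ + i) (by omega) t (by omega) (by omega)
          rw [← hiv]
          calc δ₀ * (4 * m') = 4 * c := by rw [hc]; ring
            _ < _ := h4c
        · -- h2''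
          refine ⟨τL, by omega, ?_⟩
          have hstart : e'.getVert 0 = e.getVert j₁ := by
            rw [he'get 0 (Nat.zero_le _), Nat.add_zero]
          rw [Walk.getVert_zero] at hstart
          rw [hstart]
          calc G.dist (e.getVert j₁) (γ.getVert τL) ≤ 4 * c := hτLd
            _ ≤ 4 * (δ₀ * (4 * m')) := by rw [hc]; ring_nf; omega
        · -- h3''
          refine ⟨τR, by omega, hτRlen, ?_⟩
          have hendv : e'.getVert e'.length = e.getVert j₂ := by
            rw [he'len, he'get (j₂ - j₁) (le_refl _)]; congr 1; omega
          rw [Walk.getVert_length] at hendv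
          rw [hendv]
          calc G.dist (e.getVert j₂) (γ.getVert τR) ≤ 4 * c := hτRd
            _ ≤ 4 * (δ₀ * (4 * m')) := by rw [hc]; ring_nf; omega

include hconn thin in
lemma sweep (hδ₀ : 1 ≤ δ₀) {x y : V} (γ : G.Walk x y) (hγ : γ.length = G.dist x y)
    (p : G.Walk x y) (m : ℕ) (hm8 : 8 ≤ m) (hP : 100 * (δ₀ * m) ≤ 2 ^ m) :
    ∀ fuel : ℕ, ∀ j₀ t₀ : ℕ, γ.length - t₀ ≤ fuel → j₀ ≤ p.length → t₀ ≤ γ.length →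
    G.dist (p.getVert j₀) (γ.getVert t₀) ≤ δ₀ * m →
    (∀ t, t₀ < t → t ≤ γ.length → δ₀ * m < G.dist (p.getVert j₀) (γ.getVert t)) →
    ((Finset.Ioc t₀ γ.length).filter
        (fun t => ∀ w ∈ p.support, 12 * (δ₀ * m) < G.dist w (γ.getVert t))).card * 2 ^ m
      ≤ 400 * (δ₀ * m) * (p.length - j₀) := by
  classical
  set H := δ₀ * m with hH
  have hH8 : 8 ≤ H := le_trans hm8 (Nat.le_mul_of_pos_left _ hδ₀)
  intro fuel
  induction fuel with
  | zero =>
    intro j₀ t₀ hfuel hj₀ ht₀ hanch hinv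
    have : t₀ = γ.length := by omega
    subst this
    simp
  | succ fuel ih =>
    intro j₀ t₀ hfuel hj₀ ht₀ hanch hinv
    by_cases hteq : γ.length ≤ t₀
    · have : t₀ = γ.length := by omega
      subst this
      simp
    · push_neg at hteq
      -- j₀ < p.length
      have hj₀lt : j₀ < p.length := by
        rcases Nat.lt_or_ge j₀ p.length with h | h
        · exact h
        · exfalso
          have hj₀eq : p.getVert j₀ = y := p.getVert_of_length_le h
          have := hinv γ.length hteq (le_refl _)
          rw [hj₀eq, Walk.getVert_length] at this
          simp [G.dist_self] at this
      -- find the next anchored index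
      have hexj : ∃ j, j₀ < j ∧ j ≤ p.length ∧ ∃ t, t₀ < t ∧ t ≤ γ.length ∧
          G.dist (p.getVert j) (γ.getVert t) ≤ H := by
        refine ⟨p.length, hj₀lt, le_refl _, γ.length, hteq, le_refl _, ?_⟩
        rw [p.getVert_length, γ.getVert_length]
        simp [G.dist_self]
      set j₁ := Nat.find hexj with hj₁def
      obtain ⟨hj₀j₁, hj₁le, tw, htw0, htwlen, htwd⟩ := Nat.find_spec hexj
      rw [← hj₁def] at hj₀j₁ hj₁le htwd
      -- the largest good t for j₁
      set t₁ := Nat.findGreatest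
        (fun t => G.dist (p.getVert j₁) (γ.getVert t) ≤ H) γ.length with ht₁def
      have ht₁P : G.dist (p.getVert j₁) (γ.getVert t₁) ≤ H :=
        Nat.findGreatest_spec (P := fun t => G.dist (p.getVert j₁) (γ.getVert t) ≤ H)
          htwlen htwd
      have ht₁ge : tw ≤ t₁ :=
        Nat.le_findGreatest (P := fun t => G.dist (p.getVert j₁) (γ.getVert t) ≤ H)
          htwlen htwd
      have ht₁le : t₁ ≤ γ.length := Nat.findGreatest_le _
      have ht₁inv : ∀ t, t₁ < t → t ≤ γ.length →
          H < G.dist (p.getVert j₁) (γ.getVert t) := by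
        intro t ht htlen
        have := Nat.findGreatest_is_greatest (P := fun t =>
          G.dist (p.getVert j₁) (γ.getVert t) ≤ H) ht htlen
        omega
      -- the least good t for j₁ beyond t₀
      have hext : ∃ t, t₀ < t ∧ G.dist (p.getVert j₁) (γ.getVert t) ≤ H :=
        ⟨tw, htw0, htwd⟩
      set t₁' := Nat.find hext with ht₁'def
      obtain ⟨ht₁'0, ht₁'P⟩ := Nat.find_spec hext
      rw [← ht₁'def] at ht₁'0 ht₁'P
      have ht₁'min : ∀ t, t₀ < t → t < t₁' → H < G.dist (p.getVert j₁) (γ.getVert t) := by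
        intro t ht0 htlt
        have := Nat.find_min hext htlt
        push_neg at this
        exact this ht0
      have ht₁'le : t₁' ≤ tw := Nat.find_min' hext ⟨htw0, htwd⟩
      have ht₁'lelen : t₁' ≤ γ.length := le_trans ht₁'le htwlen
      have ht₁'t₁ : t₁' ≤ t₁ := le_trans ht₁'le ht₁ge
      -- the span t₁ - t₁' is at most 2H
      have hspan : t₁ - t₁' ≤ 2 * H := by
        have hgd : G.dist (γ.getVert t₁') (γ.getVert t₁) = t₁ - t₁' :=
          geodesic_getVert_dist hconn hγ ht₁'t₁ ht₁le
        have htri := hconn.dist_triangle (u := γ.getVert t₁') (v := p.getVert j₁)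
          (w := γ.getVert t₁)
        have hcm : G.dist (γ.getVert t₁') (p.getVert j₁)
            = G.dist (p.getVert j₁) (γ.getVert t₁') := G.dist_comm
        omega
      -- split the bad set
      set Bad := fun t => ∀ w ∈ p.support, 12 * H < G.dist w (γ.getVert t) with hBad
      have hsplit : ((Finset.Ioc t₀ γ.length).filter Bad).card ≤
          ((Finset.Ioc t₀ t₁).filter Bad).card + ((Finset.Ioc t₁ γ.length).filter Bad).card := by
        have hun : Finset.Ioc t₀ γ.length = Finset.Ioc t₀ t₁ ∪ Finset.Ioc t₁ γ.length := by
          rw [Finset.Ioc_union_Ioc_eq_Ioc (by omega) ht₁le]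
        rw [hun, Finset.filter_union]
        exact Finset.card_union_le _ _
      -- first part bad set is inside a small interval
      have hsub : ((Finset.Ioc t₀ t₁).filter Bad) ⊆
          Finset.Ioo (t₀ + 11 * H) (t₁' - 11 * H) := by
        intro t ht
        rw [Finset.mem_filter, Finset.mem_Ioc] at ht
        obtain ⟨⟨ht0, ht1⟩, hbad⟩ := ht
        rw [Finset.mem_Ioo]
        have htlen : t ≤ γ.length := le_trans ht1 ht₁le
        constructor
        · -- t > t₀ + 11H, else p.getVert j₀ is 12H-close
          by_contra hcon
          push_neg at hcon
          have hgd : G.dist (γ.getVert t₀) (γ.getVert t) = t - t₀ :=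
            geodesic_getVert_dist hconn hγ (by omega) htlen
          have htri := hconn.dist_triangle (u := p.getVert j₀) (v := γ.getVert t₀)
            (w := γ.getVert t)
          have := hbad (p.getVert j₀) (getVert_mem_support _ _)
          have hcm : G.dist (p.getVert j₀) (γ.getVert t)
              = G.dist (γ.getVert t) (p.getVert j₀) := G.dist_comm
          omega
        · -- t < t₁' - 11H, else p.getVert j₁ is 12H-close
          by_contra hcon
          push_neg at hcon
          have := hbad (p.getVert j₁) (getVert_mem_support _ _)
          rcases Nat.lt_or_ge t t₁' with hcase | hcase
          · -- t₁' - 11H ≤ t < t₁'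
            have hgd : G.dist (γ.getVert t) (γ.getVert t₁') = t₁' - t :=
              geodesic_getVert_dist hconn hγ (by omega) ht₁'lelen
            have htri := hconn.dist_triangle (u := p.getVert j₁) (v := γ.getVert t₁')
              (w := γ.getVert t)
            have hcm : G.dist (γ.getVert t₁') (γ.getVert t)
                = G.dist (γ.getVert t) (γ.getVert t₁') := G.dist_comm
            have hcm2 : G.dist (p.getVert j₁) (γ.getVert t)
                = G.dist (γ.getVert t) (p.getVert j₁) := G.dist_comm
            omega
          · -- t₁' ≤ t ≤ t₁
            have hgd : G.dist (γ.getVert t₁') (γ.getVert t) = t - t₁' :=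
              geodesic_getVert_dist hconn hγ hcase htlen
            have htri := hconn.dist_triangle (u := p.getVert j₁) (v := γ.getVert t₁')
              (w := γ.getVert t)
            have hcm2 : G.dist (p.getVert j₁) (γ.getVert t)
                = G.dist (γ.getVert t) (p.getVert j₁) := G.dist_comm
            omega
      have hcard1 : ((Finset.Ioc t₀ t₁).filter Bad).card * 2 ^ m
          ≤ 400 * H * (j₁ - j₀) := by
        by_cases hchg : t₁' - t₀ ≤ 22 * H
        · -- small gap : no bad points at all
          have hempty : ((Finset.Ioc t₀ t₁).filter Bad).card = 0 := by
            have hle := Finset.card_le_card hsub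
            rw [Nat.card_Ioo] at hle
            omega
          rw [hempty, Nat.zero_mul]
          exact Nat.zero_le _
        · push_neg at hchg
          set n := t₁' - t₀ - 3 with hndef
          have hend : (wdrop p j₀).getVert (j₁ - j₀) = p.getVert j₁ := by
            rw [wdrop_getVert]; congr 1; omega
          set e := (wtake (wdrop p j₀) (j₁ - j₀)).copy rfl hend with hedef
          have helen : e.length = j₁ - j₀ := by
            rw [Walk.length_copy, wtake_length, wdrop_length]; omega
          have heget : ∀ i, i ≤ j₁ - j₀ → e.getVert i = p.getVert (j₀ + i) := by
            intro i hile
            rw [hedef, Walk.getVert_copy, wtake_getVert _ _ _ hile, wdrop_getVert]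
          have h1e : ∀ v ∈ e.support, ∀ t, t₀ + 2 ≤ t → t ≤ t₁' - 1 →
              δ₀ * m < G.dist v (γ.getVert t) := by
            intro v hv t ht1 ht2
            obtain ⟨i, hiv, hile⟩ := Walk.mem_support_iff_exists_getVert.mp hv
            rw [helen] at hile
            rw [heget i hile] at hiv
            rw [← hiv]
            have htri : j₀ + i = j₀ ∨ (j₀ < j₀ + i ∧ j₀ + i < j₁) ∨ j₀ + i = j₁ := by
              omega
            rcases htri with hj | hj | hj
            · rw [hj]
              exact hinv t (by omega) (by omega)
            · have hnt := Nat.find_min hexj (show j₀ + i < Nat.find hexj by omega)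
              push_neg at hnt
              exact hnt hj.1 (by omega) t (by omega) (by omega)
            · rw [hj]
              exact ht₁'min t (by omega) (by omega)
          have hr := tubeClaim hconn thin hδ₀ γ hγ n m (t₀ + 2) (t₁' - 1) e hm8 hP
            (by omega) (by omega) h1e
            ⟨t₀, by omega, le_trans hanch (by omega)⟩
            ⟨t₁', by omega, ht₁'lelen, le_trans ht₁'P (by omega)⟩
            (by omega)
          have hcardle : ((Finset.Ioc t₀ t₁).filter Bad).card ≤ n := by
            have hle := Finset.card_le_card hsub
            rw [Nat.card_Ioo] at hle
            omega
          calc ((Finset.Ioc t₀ t₁).filter Bad).card * 2 ^ m ≤ (n + 1) * 2 ^ m :=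
              Nat.mul_le_mul_right _ (by omega)
            _ ≤ 200 * (δ₀ * m) * e.length := hr
            _ = 200 * H * (j₁ - j₀) := by rw [helen, ← hH]
            _ ≤ 400 * H * (j₁ - j₀) := Nat.mul_le_mul_right _ (by omega)
      -- recursive part
      have hrec := ih j₁ t₁ (by omega) hj₁le ht₁le ht₁P ht₁inv
      have hsum : (j₁ - j₀) + (p.length - j₁) = p.length - j₀ := by omega
      calc ((Finset.Ioc t₀ γ.length).filter Bad).card * 2 ^ m
          ≤ (((Finset.Ioc t₀ t₁).filter Bad).card
            + ((Finset.Ioc t₁ γ.length).filter Bad).card) * 2 ^ m :=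
            Nat.mul_le_mul_right _ hsplit
        _ = ((Finset.Ioc t₀ t₁).filter Bad).card * 2 ^ m
            + ((Finset.Ioc t₁ γ.length).filter Bad).card * 2 ^ m := add_mul _ _ _
        _ ≤ 400 * H * (j₁ - j₀) + 400 * H * (p.length - j₁) := add_le_add hcard1 hrec
        _ = 400 * H * ((j₁ - j₀) + (p.length - j₁)) := (Nat.mul_add _ _ _).symm
        _ = 400 * H * (p.length - j₀) := by rw [hsum]

include hconn thin in
lemma measure_bound (hδ₀ : 1 ≤ δ₀) {x y : V} (γ : G.Walk x y) (hγ : γ.length = G.dist x y)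
    (p : G.Walk x y) (m : ℕ) (hm8 : 8 ≤ m) (hP : 100 * (δ₀ * m) ≤ 2 ^ m) :
    ((Finset.Icc 0 γ.length).filter
        (fun t => ∀ w ∈ p.support, 12 * (δ₀ * m) < G.dist w (γ.getVert t))).card * 2 ^ m
      ≤ 400 * (δ₀ * m) * p.length := by
  classical
  set H := δ₀ * m with hH
  have hH8 : 8 ≤ H := le_trans hm8 (Nat.le_mul_of_pos_left _ hδ₀)
  set t₀ := min H γ.length with ht₀
  have ht₀H : t₀ ≤ H := min_le_left _ _
  have ht₀len : t₀ ≤ γ.length := min_le_right _ _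
  have h0d : ∀ s, s ≤ γ.length → G.dist x (γ.getVert s) = s := by
    intro s hs
    have := geodesic_getVert_dist hconn hγ (Nat.zero_le s) hs
    rw [Walk.getVert_zero] at this
    simpa using this
  have hanch : G.dist (p.getVert 0) (γ.getVert t₀) ≤ H := by
    rw [Walk.getVert_zero, h0d t₀ ht₀len]
    exact ht₀H
  have hinv : ∀ t, t₀ < t → t ≤ γ.length → H < G.dist (p.getVert 0) (γ.getVert t) := by
    intro t ht htlen
    rw [Walk.getVert_zero, h0d t htlen]
    rcases le_total H γ.length with h | h
    · have : t₀ = H := min_eq_left h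
      omega
    · have : t₀ = γ.length := min_eq_right h
      omega
  have hsweep := sweep hconn thin hδ₀ γ hγ p m hm8 hP γ.length 0 t₀ (by omega)
    (Nat.zero_le _) ht₀len hanch hinv
  rw [Nat.sub_zero] at hsweep
  refine le_trans (Nat.mul_le_mul_right _ (Finset.card_le_card ?_)) hsweep
  intro t ht
  rw [Finset.mem_filter, Finset.mem_Icc] at ht
  obtain ⟨⟨_, htlen⟩, hbad⟩ := ht
  rw [Finset.mem_filter, Finset.mem_Ioc]
  refine ⟨⟨?_, htlen⟩, hbad⟩
  by_contra hcon
  push_neg at hcon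
  have := hbad x p.start_mem_support
  rw [h0d t htlen] at this
  omega

include hconn thin in
lemma measure_bound' (hδ₀ : 1 ≤ δ₀) {x y : V} (γ : G.Walk x y) (hγ : γ.length = G.dist x y)
    (p : G.Walk x y) (m : ℕ) (hm8 : 8 ≤ m) (hP : 100 * (δ₀ * m) ≤ 2 ^ m)
    (S : Finset ℕ) (hS1 : ∀ t ∈ S, t ≤ γ.length)
    (hS2 : ∀ t ∈ S, ∀ w ∈ p.support, 12 * (δ₀ * m) < G.dist w (γ.getVert t)) :
    S.card * 2 ^ m ≤ 400 * (δ₀ * m) * p.length := by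
  classical
  refine le_trans (Nat.mul_le_mul_right _ (Finset.card_le_card (fun t ht => ?_)))
    (measure_bound hconn thin hδ₀ γ hγ p m hm8 hP)
  exact Finset.mem_filter.mpr ⟨Finset.mem_Icc.mpr ⟨Nat.zero_le _, hS1 t ht⟩, hS2 t ht⟩

end Thin

lemma sq_le_two_pow {k : ℕ} (hk : 8 ≤ k) : k * k ≤ 2 ^ k := by
  induction k, hk using Nat.le_induction with
  | base => norm_num
  | succ k hk ih =>
    have h2 : 2 ^ (k + 1) = 2 ^ k + 2 ^ k := by ring
    have h8k : 8 * k ≤ k * k := Nat.mul_le_mul_right k hk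
    nlinarith [ih, h8k, hk]

end FatBigon

/-- A `δ`-hyperbolic connected graph of uniformly bounded degree has no
fat bigons (at any basepoint). -/
theorem hyperbolic_hasNoFatBigons
    {V : Type*} (X : SimpleGraph V)
    (hXconn : X.Connected) (hXdeg : BddDegree X)
    (δ : ℝ) (hδ : 1 ≤ δ) (hX : GraphHyperbolic X δ) :
    ∀ x₀ : V, HasNoFatBigons X x₀ := by
  classical
  intro x₀ L hL
  set δ₀ := ⌊δ⌋₊ with hδ₀def
  have hδ₀1 : 1 ≤ δ₀ := Nat.le_floor (by exact_mod_cast hδ)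
  have thin : ∀ ⦃a b c : V⦄ (γ₁ : X.Walk a b) (γ₂ : X.Walk b c) (γ₃ : X.Walk c a),
      γ₁.length = X.dist a b → γ₂.length = X.dist b c → γ₃.length = X.dist c a →
      ∀ u ∈ γ₁.support, ∃ v, (v ∈ γ₂.support ∨ v ∈ γ₃.support) ∧ X.dist u v ≤ δ₀ := by
    intro a b c γ₁ γ₂ γ₃ h1 h2 h3 u hu
    obtain ⟨v, hv, hvd⟩ := hX γ₁ γ₂ γ₃ h1 h2 h3 u hu
    exact ⟨v, hv, Nat.le_floor hvd⟩
  set KL := ⌈L⌉₊ with hKLdef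
  have hKL1 : 1 ≤ KL := Nat.one_le_ceil_iff.mpr (by linarith)
  set m := 2400 * δ₀ * KL with hmdef
  have hm2400 : 2400 ≤ m := by
    calc (2400 : ℕ) = 2400 * 1 * 1 := by ring
      _ ≤ 2400 * δ₀ * KL := Nat.mul_le_mul (Nat.mul_le_mul (le_refl 2400) hδ₀1) hKL1
      _ = m := hmdef.symm
  have hm8 : 8 ≤ m := by omega
  have hsq : m * m ≤ 2 ^ m := FatBigon.sq_le_two_pow (by omega)
  have hP : 100 * (δ₀ * m) ≤ 2 ^ m := by
    refine le_trans ?_ hsq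
    have h100 : 100 * δ₀ ≤ m := by
      calc 100 * δ₀ ≤ 2400 * δ₀ * KL :=
            le_trans (Nat.mul_le_mul_right δ₀ (by norm_num))
              (Nat.le_mul_of_pos_right _ (by omega))
        _ = m := hmdef.symm
    calc 100 * (δ₀ * m) = (100 * δ₀) * m := by ring
      _ ≤ m * m := Nat.mul_le_mul_right m h100
  have h2m : 2400 * ((δ₀ * m) * KL) ≤ 2 ^ m := by
    refine le_trans (le_of_eq ?_) hsq
    rw [hmdef]; ring
  set H := δ₀ * m with hHdef
  have hH8 : 8 ≤ H := le_trans hm8 (Nat.le_mul_of_pos_left _ hδ₀1)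
  refine ⟨((24 * H : ℕ) : ℝ), by positivity, ?_⟩
  intro C hC
  set Cn := ⌈C⌉₊ with hCndef
  refine ⟨6 * Cn + 100 * H + 100, ?_⟩
  intro xx hxx
  by_contra hfar
  push_neg at hfar
  obtain ⟨α₁, α₂, hα₁len, hα₂len, hsep⟩ := hxx
  obtain ⟨γ, hγlen⟩ := hXconn.exists_walk_length_eq_dist x₀ xx
  have hdR : 6 * Cn + 100 * H + 100 < γ.length := by rw [hγlen]; exact hfar
  -- length bounds in ℕ
  have hcastd : ((X.dist x₀ xx : ℕ) : ℝ) = (γ.length : ℝ) := by rw [hγlen]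
  have hℓ1 : α₁.length ≤ KL * γ.length := by
    have h2 : L * ((X.dist x₀ xx : ℕ) : ℝ) ≤ (KL : ℝ) * (γ.length : ℝ) := by
      rw [hcastd]
      exact mul_le_mul_of_nonneg_right (Nat.le_ceil L) (by positivity)
    have h3 : (α₁.length : ℝ) ≤ ((KL * γ.length : ℕ) : ℝ) := by
      push_cast
      exact le_trans hα₁len h2
    exact_mod_cast h3
  have hℓ2 : α₂.length ≤ KL * γ.length := by
    have h2 : L * ((X.dist x₀ xx : ℕ) : ℝ) ≤ (KL : ℝ) * (γ.length : ℝ) := by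
      rw [hcastd]
      exact mul_le_mul_of_nonneg_right (Nat.le_ceil L) (by positivity)
    have h3 : (α₂.length : ℝ) ≤ ((KL * γ.length : ℕ) : ℝ) := by
      push_cast
      exact le_trans hα₂len h2
    exact_mod_cast h3
  -- bad sets
  set S₁ := (Finset.Icc 0 γ.length).filter
    (fun t => ∀ w ∈ α₁.support, 12 * H < X.dist w (γ.getVert t)) with hS₁def
  set S₂ := (Finset.Icc 0 γ.length).filter
    (fun t => ∀ w ∈ α₂.support, 12 * H < X.dist w (γ.getVert t)) with hS₂def
  have hb1 := FatBigon.measure_bound' hXconn thin hδ₀1 γ hγlen α₁ m hm8 hP S₁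
    (fun t ht => (Finset.mem_Icc.mp (Finset.mem_filter.mp ht).1).2)
    (fun t ht => (Finset.mem_filter.mp ht).2)
  have hb2 := FatBigon.measure_bound' hXconn thin hδ₀1 γ hγlen α₂ m hm8 hP S₂
    (fun t ht => (Finset.mem_Icc.mp (Finset.mem_filter.mp ht).1).2)
    (fun t ht => (Finset.mem_filter.mp ht).2)
  -- cancel to get density bounds
  have hpos : 0 < H * KL := Nat.mul_pos (by omega) (by omega)
  have hc1 : 6 * S₁.card ≤ γ.length := by
    have e1 : S₁.card * 2 ^ m ≤ 400 * H * (KL * γ.length) :=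
      le_trans hb1 (Nat.mul_le_mul_left _ hℓ1)
    have e0 : S₁.card * (2400 * ((δ₀ * m) * KL)) ≤ S₁.card * 2 ^ m :=
      Nat.mul_le_mul_left _ h2m
    have e2 : S₁.card * (2400 * ((δ₀ * m) * KL)) = (6 * S₁.card) * (400 * (H * KL)) := by
      rw [hHdef]; ring
    have e3 : 400 * H * (KL * γ.length) = γ.length * (400 * (H * KL)) := by ring
    have e4 : (6 * S₁.card) * (400 * (H * KL)) ≤ γ.length * (400 * (H * KL)) := by
      rw [← e2, ← e3]
      exact le_trans e0 e1
    exact Nat.le_of_mul_le_mul_right e4 (by omega)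
  have hc2 : 6 * S₂.card ≤ γ.length := by
    have e1 : S₂.card * 2 ^ m ≤ 400 * H * (KL * γ.length) :=
      le_trans hb2 (Nat.mul_le_mul_left _ hℓ2)
    have e0 : S₂.card * (2400 * ((δ₀ * m) * KL)) ≤ S₂.card * 2 ^ m :=
      Nat.mul_le_mul_left _ h2m
    have e2 : S₂.card * (2400 * ((δ₀ * m) * KL)) = (6 * S₂.card) * (400 * (H * KL)) := by
      rw [hHdef]; ring
    have e3 : 400 * H * (KL * γ.length) = γ.length * (400 * (H * KL)) := by ring
    have e4 : (6 * S₂.card) * (400 * (H * KL)) ≤ γ.length * (400 * (H * KL)) := by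
      rw [← e2, ← e3]
      exact le_trans e0 e1
    exact Nat.le_of_mul_le_mul_right e4 (by omega)
  -- find a common good parameter t in the middle
  set W := Cn + 13 * H + 1 with hWdef
  set M := Finset.Icc W (γ.length - W) with hMdef
  have hMcard : M.card = (γ.length - W) + 1 - W := Nat.card_Icc _ _
  have hex : ∃ t, t ∈ M ∧ t ∉ S₁ ∧ t ∉ S₂ := by
    by_contra hcon
    push_neg at hcon
    have hsubM : M ⊆ S₁ ∪ S₂ := by
      intro t ht
      by_cases h1 : t ∈ S₁
      · exact Finset.mem_union_left _ h1
      · exact Finset.mem_union_right _ (hcon t ht h1)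
    have hle := Finset.card_le_card hsubM
    have hun := Finset.card_union_le S₁ S₂
    omega
  obtain ⟨t, htM, ht1, ht2⟩ := hex
  rw [hMdef, Finset.mem_Icc] at htM
  have htlen : t ≤ γ.length := by omega
  have hnp₁ : ∃ w ∈ α₁.support, X.dist w (γ.getVert t) ≤ 12 * H := by
    have h : ¬ (∀ w ∈ α₁.support, 12 * H < X.dist w (γ.getVert t)) := fun hh =>
      ht1 (Finset.mem_filter.mpr ⟨Finset.mem_Icc.mpr ⟨Nat.zero_le _, htlen⟩, hh⟩)
    push_neg at h
    exact h
  have hnp₂ : ∃ w ∈ α₂.support, X.dist w (γ.getVert t) ≤ 12 * H := by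
    have h : ¬ (∀ w ∈ α₂.support, 12 * H < X.dist w (γ.getVert t)) := fun hh =>
      ht2 (Finset.mem_filter.mpr ⟨Finset.mem_Icc.mpr ⟨Nat.zero_le _, htlen⟩, hh⟩)
    push_neg at h
    exact h
  obtain ⟨w₁, hw₁, hw₁d⟩ := hnp₁
  obtain ⟨w₂, hw₂, hw₂d⟩ := hnp₂
  -- geodesic distances
  have h0t : X.dist x₀ (γ.getVert t) = t := by
    have := FatBigon.geodesic_getVert_dist hXconn hγlen (Nat.zero_le t) htlen
    rw [Walk.getVert_zero] at this
    simpa using this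
  have hxt : X.dist (γ.getVert t) xx = γ.length - t := by
    have := FatBigon.geodesic_getVert_dist hXconn hγlen htlen (le_refl γ.length)
    rwa [Walk.getVert_length] at this
  -- qualifications for w₁
  have q11 : Cn < X.dist x₀ w₁ := by
    have htri := hXconn.dist_triangle (u := x₀) (v := w₁) (w := γ.getVert t)
    omega
  have q12 : Cn < X.dist xx w₁ := by
    have htri := hXconn.dist_triangle (u := γ.getVert t) (v := w₁) (w := xx)
    have hcm : X.dist w₁ xx = X.dist xx w₁ := X.dist_comm
    have hcm2 : X.dist (γ.getVert t) w₁ = X.dist w₁ (γ.getVert t) := X.dist_comm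
    omega
  have q21 : Cn < X.dist x₀ w₂ := by
    have htri := hXconn.dist_triangle (u := x₀) (v := w₂) (w := γ.getVert t)
    omega
  have q22 : Cn < X.dist xx w₂ := by
    have htri := hXconn.dist_triangle (u := γ.getVert t) (v := w₂) (w := xx)
    have hcm : X.dist w₂ xx = X.dist xx w₂ := X.dist_comm
    have hcm2 : X.dist (γ.getVert t) w₂ = X.dist w₂ (γ.getVert t) := X.dist_comm
    omega
  have hd12 : X.dist w₁ w₂ ≤ 24 * H := by
    have htri := hXconn.dist_triangle (u := w₁) (v := γ.getVert t) (w := w₂)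
    have hcm : X.dist (γ.getVert t) w₂ = X.dist w₂ (γ.getVert t) := X.dist_comm
    omega
  have hCCn : C ≤ (Cn : ℝ) := Nat.le_ceil C
  have hlt := hsep w₁ hw₁ w₂ hw₂
    ⟨lt_of_le_of_lt hCCn (by exact_mod_cast q11), lt_of_le_of_lt hCCn (by exact_mod_cast q12)⟩
    ⟨lt_of_le_of_lt hCCn (by exact_mod_cast q21), lt_of_le_of_lt hCCn (by exact_mod_cast q22)⟩
  have hle : (X.dist w₁ w₂ : ℝ) ≤ ((24 * H : ℕ) : ℝ) := by exact_mod_cast hd12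
  linarith
end
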